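/- arXiv:1512.01500 — 4 statements merged into one kernel-verified Lean document; each statement's English description precedes it below -/
import Mathlib

section
/- Let G be a countable discrete group with a sofic approximation Σ. Let (X_i, d_{X_i}), i ≥ 1, be compact metric spaces of diameter ≤ 1, let λ be a shift-invariant Borel probability measure on (∏_{i≥1} X_i)^G ≅ ∏_{i≥1} X_i^G which is a joining of G-processes (X_i^G, μ_i, S) (i.e., its marginal on each X_i^G is μ_i), and for each k let λ_k be the image of λ under the coordinate projection onto (∏_{i=1}^k X_i)^G. Equip ∏_{i=1}^k X_i with the metric d_k((x_i), (x'_i)) = Σ_{i=1}^k 2^{-i} d_{X_i}(x_i, x'_i) and ∏_{i≥1} X_i with d((x_i), (x'_i)) = Σ_{i≥1} 2^{-i} d_{X_i}(x_i, x'_i). If for every k the metric G-process ((∏_{i=1}^k X_i)^G, λ_k, S, d_k) has connected model spaces rel Σ, then ((∏_{i≥1} X_i)^G, λ, S, d) has connected model spaces rel Σ. -/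
open MeasureTheory Filter Topology
open scoped ENNReal NNReal

section Defs

variable {G : Type*} [Group G]

/-- The right-shift action of `G` on `G → X`. -/
def shift {X : Type*} (g : G) (x : G → X) : G → X := fun h => x (h * g)

/-- The process map `φ^G` associated to `φ : X^G → Y`. -/
def procMap {X Y : Type*} (φ : (G → X) → Y) (x : G → X) : G → Y := fun g => φ (shift g x)

/-- Shift-invariance of a measure on `X^G`. -/
def ShiftInvariant {X : Type*} [MeasurableSpace X] (μ : Measure (G → X)) : Prop :=
  ∀ g : G, μ.map (shift g) = μ

/-- The pullback name of `x : V → X` at `v ∈ V`. -/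
def pullbackName {V X : Type*} (σ : G → Equiv.Perm V) (v : V) (x : V → X) : G → X :=
  fun g => x (σ g v)

lemma measurable_shift {X : Type*} [MeasurableSpace X] (g : G) :
    Measurable (shift (X := X) g) :=
  measurable_pi_lambda _ fun h => measurable_pi_apply (h * g)

/-- The empirical distribution of a model `x : V → X` along `σ : G → Sym(V)`. -/
noncomputable def empDist {V X : Type*} [Fintype V] [Nonempty V] [MeasurableSpace X]
    (σ : G → Equiv.Perm V) (x : V → X) : ProbabilityMeasure (G → X) :=
  ⟨(Fintype.card V : ℝ≥0∞)⁻¹ • ∑ v : V, Measure.dirac (pullbackName σ v x), by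
    constructor
    simp only [Measure.smul_apply, Measure.coe_finset_sum, Finset.sum_apply,
      Measure.dirac_apply_of_mem (Set.mem_univ _), Finset.sum_const, Finset.card_univ,
      nsmul_eq_mul, mul_one, smul_eq_mul]
    exact ENNReal.inv_mul_cancel (by exact_mod_cast Fintype.card_ne_zero)
      (by simp)⟩

/-- A sofic approximation to `G`. -/
def IsSoficApprox (V : ℕ → Type*) (σ : ∀ n, G → Equiv.Perm (V n)) : Prop :=
  (∀ g h : G, Tendsto
      (fun n => (Nat.card {v : V n // σ n g (σ n h v) = σ n (g * h) v} : ℝ) / (Nat.card (V n) : ℝ))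
      atTop (𝓝 1)) ∧
  ∀ g : G, g ≠ 1 → Tendsto
      (fun n => (Nat.card {v : V n // σ n g v ≠ v} : ℝ) / (Nat.card (V n) : ℝ))
      atTop (𝓝 1)

/-- Normalized Hamming average of `dX` over `V`. -/
noncomputable def hamming {V X : Type*} [Fintype V] (dX : X → X → ℝ) (x y : V → X) : ℝ :=
  (∑ v : V, dX (x v) (y v)) / (Fintype.card V : ℝ)

/-- The property of having connected model spaces relative to the sofic approximation `σ`. -/
def ConnectedModelSpaces [Countable G] (V : ℕ → Type*) [∀ n, Fintype (V n)] [∀ n, Nonempty (V n)]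
    (σ : ∀ n, G → Equiv.Perm (V n))
    (X : Type*) [TopologicalSpace X] [MeasurableSpace X] [OpensMeasurableSpace X]
    [SecondCountableTopology X]
    (dX : X → X → ℝ) (μ : ProbabilityMeasure (G → X)) : Prop :=
  ∀ n : ℕ → ℕ, StrictMono n → ∀ x y : (i : ℕ) → V (n i) → X,
    Tendsto (fun i => empDist (σ (n i)) (x i)) atTop (𝓝 μ) →
    Tendsto (fun i => empDist (σ (n i)) (y i)) atTop (𝓝 μ) →
    ∃ (δ : ℕ → ℝ) (ℓ : ℕ → ℕ) (p : (i : ℕ) → ℕ → V (n i) → X),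
      Antitone δ ∧ (∀ i, 0 < δ i) ∧ Tendsto δ atTop (𝓝 0) ∧
      (∀ i, p i 0 = x i) ∧ (∀ i, p i (ℓ i) = y i) ∧
      (∀ i j, j < ℓ i → hamming dX (p i j) (p i (j + 1)) < δ i) ∧
      ∀ O ∈ 𝓝 μ, ∀ᶠ i in atTop, ∀ j ≤ ℓ i, empDist (σ (n i)) (p i j) ∈ O

/-- The graph map `x ↦ (x, Φ(x))`, viewed as a map into `(X × Y)^G`. -/
def graphMap {X Y : Type*} (φ : (G → X) → Y) (x : G → X) : G → X × Y :=
  fun g => (x g, φ (shift g x))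

lemma measurable_graphMap {X Y : Type*} [MeasurableSpace X] [MeasurableSpace Y]
    {φ : (G → X) → Y} (hφ : Measurable φ) : Measurable (graphMap (G := G) φ) :=
  measurable_pi_lambda _ fun g => (measurable_pi_apply g).prodMk (hφ.comp (measurable_shift g))

lemma measurable_procMap {X Y : Type*} [MeasurableSpace X] [MeasurableSpace Y]
    {φ : (G → X) → Y} (hφ : Measurable φ) : Measurable (procMap (G := G) φ) :=
  measurable_pi_lambda _ fun g => hφ.comp (measurable_shift g)

/-- The graphical joining of `μ` and its pushforward under the factor map generated by `φ`. -/
noncomputable def graphJoin {X Y : Type*} [MeasurableSpace X] [MeasurableSpace Y]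
    {φ : (G → X) → Y} (hφ : Measurable φ) (μ : ProbabilityMeasure (G → X)) :
    ProbabilityMeasure (G → X × Y) :=
  μ.map (f := graphMap φ) (measurable_graphMap hφ).aemeasurable

/-- Model-surjectivity of the factor map generated by `φ`, relative to `σ`. -/
def ModelSurjective [Countable G] (V : ℕ → Type*) [∀ n, Fintype (V n)] [∀ n, Nonempty (V n)]
    (σ : ∀ n, G → Equiv.Perm (V n))
    {X Y : Type*} [TopologicalSpace X] [MeasurableSpace X] [OpensMeasurableSpace X]
    [SecondCountableTopology X]
    [TopologicalSpace Y] [MeasurableSpace Y] [OpensMeasurableSpace Y] [SecondCountableTopology Y]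
    (φ : (G → X) → Y) (hφ : Measurable φ)
    (μ : ProbabilityMeasure (G → X)) (ν : ProbabilityMeasure (G → Y)) : Prop :=
  ∀ n : ℕ → ℕ, StrictMono n → ∀ y : (i : ℕ) → V (n i) → Y,
    Tendsto (fun i => empDist (σ (n i)) (y i)) atTop (𝓝 ν) →
    ∃ x : (i : ℕ) → V (n i) → X,
      Tendsto (fun i => empDist (σ (n i)) (fun v => (x i v, y i v))) atTop (𝓝 (graphJoin hφ μ))

end Defs


section Aux

open BoundedContinuousFunction

set_option linter.unusedSectionVars false

variable {G : Type*} [Group G]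

lemma empDist_map_comp {V Y Z : Type*} [Fintype V] [Nonempty V]
    [MeasurableSpace Y] [MeasurableSpace Z]
    (σ : G → Equiv.Perm V) (h : Y → Z) (hm : Measurable h) (w : V → Y) :
    (empDist σ w).map (f := fun ω : G → Y => fun g => h (ω g))
      (measurable_pi_lambda _ fun g => hm.comp (measurable_pi_apply g)).aemeasurable
      = empDist σ (fun v => h (w v)) := by
  have Fm : Measurable (fun ω : G → Y => fun g => h (ω g)) :=
    measurable_pi_lambda _ fun g => hm.comp (measurable_pi_apply g)
  apply Subtype.ext
  show Measure.map _ ((Fintype.card V : ℝ≥0∞)⁻¹ • ∑ v : V, Measure.dirac (pullbackName σ v w)) = _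
  ext s hs
  rw [Measure.map_apply Fm hs]
  simp only [empDist, ProbabilityMeasure.coe_mk, Measure.smul_apply, Measure.finset_sum_apply,
    smul_eq_mul]
  congr 1
  refine Finset.sum_congr rfl fun v _ => ?_
  rw [Measure.dirac_apply' _ (Fm hs), Measure.dirac_apply' _ hs]
  have : (fun ω : G → Y => fun g => h (ω g)) (pullbackName σ v w)
      = pullbackName σ v (fun v => h (w v)) := rfl
  by_cases hmem : pullbackName σ v w ∈ (fun ω : G → Y => fun g => h (ω g)) ⁻¹' s
  · rw [Set.indicator_of_mem hmem, Set.indicator_of_mem (by rw [← this]; exact hmem)]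
    rfl
  · rw [Set.indicator_of_notMem hmem, Set.indicator_of_notMem (by rw [← this]; exact hmem)]


lemma summable_halfpow_tail (K : ℕ) :
    Summable (fun m : ℕ => (if m < K then (0:ℝ) else (1/2)^(m+1))) := by
  have hg : Summable (fun m : ℕ => ((1:ℝ)/2)^(m+1)) :=
    ((summable_geometric_of_lt_one (r := (1:ℝ)/2) (by norm_num) (by norm_num)).mul_left
      ((1:ℝ)/2)).congr (fun m => by ring)
  refine Summable.of_nonneg_of_le (fun m => by positivity) (fun m => ?_) hg
  by_cases h : m < K
  · simp only [h, if_true]; positivity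
  · simp [h]

lemma tsum_halfpow_tail (K : ℕ) :
    ∑' m : ℕ, (if m < K then 0 else ((1:ℝ)/2)^(m+1)) = (1/2)^K := by
  induction K with
  | zero =>
      simp only [Nat.not_lt_zero, if_false, pow_zero]
      have : ∀ m : ℕ, ((1:ℝ)/2)^(m+1) = (1/2) * (1/2)^m := fun m => by ring
      rw [tsum_congr this, tsum_mul_left, tsum_geometric_of_lt_one (by norm_num) (by norm_num)]
      norm_num
  | succ K ih =>
      have hg : Summable (fun m : ℕ => ((1:ℝ)/2)^(m+1)) :=
        ((summable_geometric_of_lt_one (r := (1:ℝ)/2) (by norm_num) (by norm_num)).mul_left ((1:ℝ)/2)).congr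
          (fun m => by ring)
      have hsum1 : Summable (fun m : ℕ => (if m < K + 1 then (0:ℝ) else (1/2)^(m+1))) := by
        refine Summable.of_nonneg_of_le (fun m => by positivity) (fun m => ?_) hg
        by_cases h : m < K + 1
        · simp only [h, if_true]; positivity
        · simp [h]
      have key : ∀ m : ℕ, (if m < K then (0:ℝ) else (1/2)^(m+1))
          = (if m < K + 1 then (0:ℝ) else (1/2)^(m+1)) + (if m = K then (1/2)^(K+1) else 0) := by
        intro m
        rcases lt_trichotomy m K with h | h | h
        · simp [h, Nat.lt_succ_of_lt h, Nat.ne_of_lt h]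
        · subst h; simp
        · have h1 : ¬ m < K := by omega
          have h2 : ¬ m < K + 1 := by omega
          have h3 : m ≠ K := by omega
          simp [h1, h2, h3]
      rw [tsum_congr key, Summable.tsum_add hsum1 ⟨_, hasSum_ite_eq K (((1:ℝ)/2)^(K+1))⟩,
        tsum_ite_eq K (fun _ => ((1:ℝ)/2)^(K+1))] at ih
      have : ∑' m : ℕ, (if m < K + 1 then (0:ℝ) else (1/2)^(m+1)) = (1/2)^K - (1/2)^(K+1) := by
        linarith
      rw [this]; ring


lemma cylinder_approx {G : Type*} [Countable G] {X : ℕ → Type*} [∀ i, MetricSpace (X i)]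
    [∀ i, CompactSpace (X i)]
    (f : (G → (∀ i, X i)) →ᵇ ℝ) {ε : ℝ} (hε : 0 < ε) :
    ∃ K : ℕ, ∀ u w : G → ∀ i, X i,
      (∀ g : G, ∀ i < K, u g i = w g i) → |f u - f w| ≤ ε := by
  by_contra hcon
  push_neg at hcon
  choose u w hagree hfar using hcon
  obtain ⟨z, φ, hφ, hz⟩ := CompactSpace.tendsto_subseq (fun K => (u K, w K))
  have hu : Tendsto (fun m => u (φ m)) atTop (𝓝 z.1) :=
    ((continuous_fst.tendsto z).comp hz)
  have hw : Tendsto (fun m => w (φ m)) atTop (𝓝 z.2) :=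
    ((continuous_snd.tendsto z).comp hz)
  have hzz : z.1 = z.2 := by
    funext g i
    have h1 : Tendsto (fun m => u (φ m) g i) atTop (𝓝 (z.1 g i)) :=
      ((continuous_apply i).tendsto _).comp (((continuous_apply g).tendsto _).comp hu)
    have h2 : Tendsto (fun m => w (φ m) g i) atTop (𝓝 (z.2 g i)) :=
      ((continuous_apply i).tendsto _).comp (((continuous_apply g).tendsto _).comp hw)
    refine tendsto_nhds_unique (h1.congr' ?_) h2
    filter_upwards [eventually_ge_atTop (i+1)] with m hm
    exact hagree (φ m) g i (lt_of_lt_of_le (Nat.lt_succ_self i) (le_trans hm (hφ.le_apply)))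
  have hlim : Tendsto (fun m => |f (u (φ m)) - f (w (φ m))|) atTop
      (𝓝 (|f z.1 - f z.2|)) := by
    have := ((f.continuous.tendsto z.1).comp hu).sub ((f.continuous.tendsto z.2).comp hw)
    exact this.abs
  rw [hzz, sub_self, abs_zero] at hlim
  have : (0:ℝ) ≥ ε := ge_of_tendsto hlim (by
    filter_upwards with m; exact (hfar (φ m)).le)
  linarith

lemma tendsto_of_forall_marginal {G : Type} [Group G] [Countable G]
    (X : ℕ → Type) [∀ i, MetricSpace (X i)] [∀ i, CompactSpace (X i)]
    [∀ i, MeasurableSpace (X i)] [∀ i, BorelSpace (X i)]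
    (y₀ : (i : ℕ) → X i)
    (lam : ProbabilityMeasure (G → ((i : ℕ) → X i)))
    (Q : ℕ → ProbabilityMeasure (G → ((i : ℕ) → X i)))
    (h : ∀ K : ℕ, Tendsto
      (fun m => (Q m).map (f := fun w g => fun j : Fin K => w g (j : ℕ))
        (Measurable.aemeasurable (measurable_pi_lambda _ fun g =>
          measurable_pi_lambda _ fun j =>
            (measurable_pi_apply (j : ℕ)).comp (measurable_pi_apply g))))
      atTop
      (𝓝 (lam.map (f := fun w g => fun j : Fin K => w g (j : ℕ))
        (Measurable.aemeasurable (measurable_pi_lambda _ fun g =>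
          measurable_pi_lambda _ fun j =>
            (measurable_pi_apply (j : ℕ)).comp (measurable_pi_apply g)))))) :
    Tendsto Q atTop (𝓝 lam) := by
  rw [ProbabilityMeasure.tendsto_iff_forall_integral_tendsto]
  intro f
  rw [Metric.tendsto_atTop]
  intro ε hε
  have hε4 : 0 < ε / 4 := by linarith
  obtain ⟨K, hK⟩ := cylinder_approx f hε4
  -- the extension and projection maps
  set projF : (G → ((i : ℕ) → X i)) → (G → ((j : Fin K) → X (j : ℕ))) :=
    fun w g => fun j : Fin K => w g (j : ℕ) with hprojF
  have hprojFm : Measurable projF := measurable_pi_lambda _ fun g =>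
    measurable_pi_lambda _ fun j => (measurable_pi_apply (j : ℕ)).comp (measurable_pi_apply g)
  have hprojFc : Continuous projF := continuous_pi fun g =>
    continuous_pi fun j => (continuous_apply (j : ℕ)).comp (continuous_apply g)
  set extF : (G → ((j : Fin K) → X (j : ℕ))) → (G → ((i : ℕ) → X i)) :=
    fun z g i => if h : i < K then z g ⟨i, h⟩ else y₀ i with hextF
  have hextFc : Continuous extF := by
    refine continuous_pi fun g => continuous_pi fun i => ?_
    by_cases h : i < K
    · simp only [hextF, h, dif_pos]
      exact (continuous_apply (⟨i, h⟩ : Fin K)).comp (continuous_apply g)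
    · simp only [hextF, h, dif_neg, not_false_iff]
      exact continuous_const
  set g : (G → ((j : Fin K) → X (j : ℕ))) →ᵇ ℝ := f.compContinuous ⟨extF, hextFc⟩ with hg
  set gg : (G → ((i : ℕ) → X i)) →ᵇ ℝ := g.compContinuous ⟨projF, hprojFc⟩ with hgg
  have hclose : ∀ ω : G → ((i : ℕ) → X i), |f ω - gg ω| ≤ ε / 4 := by
    intro ω
    have : gg ω = f (extF (projF ω)) := rfl
    rw [this]
    refine hK ω (extF (projF ω)) fun g' i hi => ?_
    simp only [hextF, hprojF, hi, dif_pos]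
  -- integral comparison for an arbitrary probability measure
  have hcmp : ∀ P : ProbabilityMeasure (G → ((i : ℕ) → X i)),
      |(∫ ω, f ω ∂(P : Measure _)) - ∫ z, g z ∂((P.map hprojFm.aemeasurable : ProbabilityMeasure _) : Measure _)| ≤ ε / 4 := by
    intro P
    have hmap : ∫ z, g z ∂((P.map hprojFm.aemeasurable : ProbabilityMeasure _) : Measure _)
        = ∫ ω, g (projF ω) ∂(P : Measure _) := by
      rw [ProbabilityMeasure.toMeasure_map]
      exact integral_map hprojFm.aemeasurable g.continuous.aestronglyMeasurable
    rw [hmap]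
    have hint1 : Integrable f (P : Measure _) := f.integrable _
    have hint2 : Integrable gg (P : Measure _) := gg.integrable _
    have : (∫ ω, f ω ∂(P : Measure _)) - ∫ ω, g (projF ω) ∂(P : Measure _)
        = ∫ ω, (f ω - gg ω) ∂(P : Measure _) := by
      rw [integral_sub hint1 hint2]; rfl
    rw [this]
    have := norm_integral_le_of_norm_le_const (μ := (P : Measure _))
      (f := fun ω => f ω - gg ω) (C := ε / 4)
      (Filter.Eventually.of_forall fun ω => by
        rw [Real.norm_eq_abs]; exact hclose ω)
    simpa using this
  -- now use convergence of the K-marginals with test function g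
  have hmar := (ProbabilityMeasure.tendsto_iff_forall_integral_tendsto).mp (h K) g
  rw [Metric.tendsto_atTop] at hmar
  obtain ⟨N, hN⟩ := hmar (ε / 4) hε4
  refine ⟨N, fun m hm => ?_⟩
  have h1 := hcmp (Q m)
  have h2 := hcmp lam
  have h3 := hN m hm
  rw [Real.dist_eq] at h3 ⊢
  set a := ∫ ω, f ω ∂((Q m : Measure _))
  set b := ∫ z, g z ∂(((Q m).map hprojFm.aemeasurable : ProbabilityMeasure _) : Measure _)
  set c := ∫ z, g z ∂((lam.map hprojFm.aemeasurable : ProbabilityMeasure _) : Measure _)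
  set d := ∫ ω, f ω ∂((lam : Measure _))
  calc |a - d| = |(a - b) + (b - c) + (c - d)| := by ring_nf
    _ ≤ |a - b| + |b - c| + |c - d| := by
        exact le_trans (abs_add_le _ _) (by gcongr; exact abs_add_le _ _)
    _ < ε := by
        have h2' : |c - d| ≤ ε / 4 := by rw [abs_sub_comm]; exact h2
        linarith

end Aux


section MainAux

set_option linter.unusedSectionVars false

variable {G : Type} [Group G] [Countable G]
variable (X : ℕ → Type) [∀ i, MetricSpace (X i)] [∀ i, CompactSpace (X i)]
  [∀ i, MeasurableSpace (X i)] [∀ i, BorelSpace (X i)]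

/-- Projection of a `Y^G`-point to level `k`. -/
def projW (k : ℕ) : (G → ((i : ℕ) → X i)) → (G → ((j : Fin k) → X (j : ℕ))) :=
  fun w g => fun j : Fin k => w g (j : ℕ)

lemma measurable_projW (k : ℕ) : Measurable (projW (G := G) X k) :=
  measurable_pi_lambda _ fun g => measurable_pi_lambda _ fun j =>
    (measurable_pi_apply (j : ℕ)).comp (measurable_pi_apply g)

lemma continuous_projW (k : ℕ) : Continuous (projW (G := G) X k) :=
  continuous_pi fun g => continuous_pi fun j =>
    (continuous_apply (j : ℕ)).comp (continuous_apply g)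

/-- Truncation from level `k` to level `l`, filling missing coordinates from `y₀`. -/
def truncY (y₀ : (i : ℕ) → X i) (l k : ℕ) (z : (j : Fin k) → X (j : ℕ)) :
    (j : Fin l) → X (j : ℕ) :=
  fun j => if h : (j : ℕ) < k then z ⟨(j : ℕ), h⟩ else y₀ (j : ℕ)

/-- Truncation on `G`-sequences. -/
def truncW (y₀ : (i : ℕ) → X i) (l k : ℕ) :
    (G → ((j : Fin k) → X (j : ℕ))) → (G → ((j : Fin l) → X (j : ℕ))) :=
  fun ω => fun g => truncY X y₀ l k (ω g)

lemma measurable_truncY (y₀ : (i : ℕ) → X i) (l k : ℕ) : Measurable (truncY X y₀ l k) := by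
  refine measurable_pi_lambda _ fun j => ?_
  by_cases h : (j : ℕ) < k
  · simp only [truncY, h, dif_pos]
    exact measurable_pi_apply _
  · simp only [truncY, h, dif_neg, not_false_iff]
    exact measurable_const

lemma continuous_truncY (y₀ : (i : ℕ) → X i) (l k : ℕ) : Continuous (truncY X y₀ l k) := by
  refine continuous_pi fun j => ?_
  by_cases h : (j : ℕ) < k
  · simp only [truncY, h, dif_pos]
    exact continuous_apply _
  · simp only [truncY, h, dif_neg, not_false_iff]
    exact continuous_const

lemma measurable_truncW (y₀ : (i : ℕ) → X i) (l k : ℕ) : Measurable (truncW (G := G) X y₀ l k) :=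
  measurable_pi_lambda _ fun g => (measurable_truncY X y₀ l k).comp (measurable_pi_apply g)

lemma continuous_truncW (y₀ : (i : ℕ) → X i) (l k : ℕ) : Continuous (truncW (G := G) X y₀ l k) :=
  continuous_pi fun g => (continuous_truncY X y₀ l k).comp (continuous_apply g)

lemma truncW_comp_projW (y₀ : (i : ℕ) → X i) {l k : ℕ} (hlk : l ≤ k)
    (w : G → ((i : ℕ) → X i)) :
    truncW (G := G) X y₀ l k (projW X k w) = projW X l w := by
  funext g j
  have h : (j : ℕ) < k := lt_of_lt_of_le j.2 hlk
  simp only [truncW, truncY, projW, h, dif_pos]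

end MainAux

set_option maxHeartbeats 2000000 in
/-- **Theorem B.**  If every finite sub-joining of an infinite joining has connected model spaces
rel `Σ`, then so does the infinite joining (realizing inverse limits of `G`-systems). -/
theorem inverseLimit_connectedModelSpaces {G : Type} [Group G] [Countable G]
    (V : ℕ → Type) [∀ n, Fintype (V n)] [∀ n, Nonempty (V n)]
    (σ : ∀ n, G → Equiv.Perm (V n)) (hsofic : IsSoficApprox V σ)
    (X : ℕ → Type) [∀ i, MetricSpace (X i)] [∀ i, CompactSpace (X i)]
    [∀ i, MeasurableSpace (X i)] [∀ i, BorelSpace (X i)]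
    (hdiam : ∀ i, ∀ a b : X i, dist a b ≤ 1)
    (lam : ProbabilityMeasure (G → ((i : ℕ) → X i)))
    (hinv : ShiftInvariant lam.toMeasure)
    (μ : (i : ℕ) → ProbabilityMeasure (G → X i))
    (hjoin : ∀ i : ℕ,
      lam.toMeasure.map (fun w => fun g => w g i) = (μ i).toMeasure)
    (hconn : ∀ k : ℕ,
      ConnectedModelSpaces V σ ((j : Fin k) → X (j : ℕ))
        (fun a b => ∑ j : Fin k, (1 / 2 : ℝ) ^ ((j : ℕ) + 1) * dist (a j) (b j))
        (lam.map (f := fun w => fun g => fun j : Fin k => w g (j : ℕ))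
          (Measurable.aemeasurable (measurable_pi_lambda _ fun g =>
            measurable_pi_lambda _ fun j =>
              (measurable_pi_apply (j : ℕ)).comp (measurable_pi_apply g))))) :
    ConnectedModelSpaces V σ ((i : ℕ) → X i)
      (fun a b => ∑' i : ℕ, (1 / 2 : ℝ) ^ (i + 1) * dist (a i) (b i)) lam := by
  classical
  intro n hn x y hx hy
  -- a base point
  have hne : Nonempty (G → ((i : ℕ) → X i)) := by
    have : NeZero lam.toMeasure := ⟨IsProbabilityMeasure.ne_zero lam.toMeasure⟩
    exact Measure.nonempty_of_neZero lam.toMeasure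
  obtain ⟨ω₀⟩ := hne
  set y₀ : (i : ℕ) → X i := ω₀ 1 with hy₀
  -- the level-k joinings
  set lamK : ∀ k : ℕ, ProbabilityMeasure (G → ((j : Fin k) → X (j : ℕ))) :=
    fun k => lam.map (measurable_projW X k).aemeasurable with hlamK
  -- pushforward of empirical distributions at level k
  have hempx : ∀ k : ℕ, Tendsto
      (fun i => empDist (σ (n i)) (fun v => fun j : Fin k => x i v (j : ℕ)))
      atTop (𝓝 (lamK k)) := by
    intro k
    have h2 := ProbabilityMeasure.tendsto_map_of_tendsto_of_continuous _ _ hx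
      (continuous_projW (G := G) X k)
    have h3 : ∀ i, (empDist (σ (n i)) (x i)).map
        (continuous_projW (G := G) X k).measurable.aemeasurable
        = empDist (σ (n i)) (fun v => fun j : Fin k => x i v (j : ℕ)) := by
      intro i
      exact empDist_map_comp (σ (n i)) (fun a : (i : ℕ) → X i => fun j : Fin k => a (j : ℕ))
        (measurable_pi_lambda _ fun j => measurable_pi_apply _) (x i)
    exact Tendsto.congr h3 h2
  have hempy : ∀ k : ℕ, Tendsto
      (fun i => empDist (σ (n i)) (fun v => fun j : Fin k => y i v (j : ℕ)))
      atTop (𝓝 (lamK k)) := by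
    intro k
    have h2 := ProbabilityMeasure.tendsto_map_of_tendsto_of_continuous _ _ hy
      (continuous_projW (G := G) X k)
    have h3 : ∀ i, (empDist (σ (n i)) (y i)).map
        (continuous_projW (G := G) X k).measurable.aemeasurable
        = empDist (σ (n i)) (fun v => fun j : Fin k => y i v (j : ℕ)) := by
      intro i
      exact empDist_map_comp (σ (n i)) (fun a : (i : ℕ) → X i => fun j : Fin k => a (j : ℕ))
        (measurable_pi_lambda _ fun j => measurable_pi_apply _) (y i)
    exact Tendsto.congr h3 h2
  -- apply the finite-level connectivity hypotheses
  have H : ∀ k : ℕ, ∃ (δ : ℕ → ℝ) (ℓ : ℕ → ℕ)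
      (p : (i : ℕ) → ℕ → V (n i) → ((j : Fin k) → X (j : ℕ))),
      Antitone δ ∧ (∀ i, 0 < δ i) ∧ Tendsto δ atTop (𝓝 0) ∧
      (∀ i, p i 0 = fun v => fun j : Fin k => x i v (j : ℕ)) ∧
      (∀ i, p i (ℓ i) = fun v => fun j : Fin k => y i v (j : ℕ)) ∧
      (∀ i j, j < ℓ i →
        hamming (fun a b => ∑ j : Fin k, (1 / 2 : ℝ) ^ ((j : ℕ) + 1) * dist (a j) (b j))
          (p i j) (p i (j + 1)) < δ i) ∧
      ∀ O ∈ 𝓝 (lamK k), ∀ᶠ i in atTop, ∀ j ≤ ℓ i, empDist (σ (n i)) (p i j) ∈ O := by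
    intro k
    exact hconn k n hn _ _ (hempx k) (hempy k)
  choose δk ℓk pk hδa hδp hδ0 hp0 hpl hstep hΩ using H
  -- countable antitone neighbourhood bases at each level
  have hbasis : ∀ l : ℕ, ∃ B : ℕ → Set (ProbabilityMeasure (G → ((j : Fin l) → X (j : ℕ)))),
      (𝓝 (lamK l)).HasAntitoneBasis B := fun l => (𝓝 (lamK l)).exists_antitone_basis
  choose B hB using hbasis
  -- compatibility of the level measures
  have hcompat : ∀ l k : ℕ, l ≤ k →
      (lamK k).map (measurable_truncW X y₀ l k).aemeasurable = lamK l := by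
    intro l k hlk
    apply Subtype.ext
    show Measure.map (truncW X y₀ l k) (Measure.map (projW X k) lam.toMeasure)
        = Measure.map (projW X l) lam.toMeasure
    rw [Measure.map_map (measurable_truncW X y₀ l k) (measurable_projW X k)]
    congr 1
    funext w
    exact truncW_comp_projW X y₀ hlk w
  -- marginal control of the level-k paths
  have hmargN : ∀ k l m : ℕ, ∃ N : ℕ, l ≤ k → ∀ i ≥ N, ∀ j ≤ ℓk k i,
      empDist (σ (n i)) (fun v => truncY X y₀ l k (pk k i j v)) ∈ B l m := by
    intro k l m
    by_cases hlk : l ≤ k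
    swap
    · exact ⟨0, fun h => absurd h hlk⟩
    have hcont := continuous_truncW (G := G) X y₀ l k
    have hBm : B l m ∈ 𝓝 (lamK l) := (hB l).1.mem_of_mem trivial
    have hO' : (fun ν : ProbabilityMeasure (G → ((j : Fin k) → X (j : ℕ))) =>
        ν.map hcont.measurable.aemeasurable) ⁻¹' (B l m) ∈ 𝓝 (lamK k) := by
      refine ContinuousAt.preimage_mem_nhds
        ((ProbabilityMeasure.continuous_map hcont).continuousAt) ?_
      have heq : (lamK k).map hcont.measurable.aemeasurable = lamK l := hcompat l k hlk
      rw [heq]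
      exact hBm
    have hev := hΩ k _ hO'
    rw [eventually_atTop] at hev
    obtain ⟨N0, hN0⟩ := hev
    refine ⟨N0, fun _ i hi j hj => ?_⟩
    have hmem := hN0 i hi j hj
    have heq := empDist_map_comp (σ (n i)) (truncY X y₀ l k)
      (measurable_truncY X y₀ l k) (pk k i j)
    rw [← heq]
    exact hmem
  choose N hN using hmargN
  -- thresholds for the step sizes
  have hMex : ∀ k : ℕ, ∃ M : ℕ, ∀ i ≥ M, δk k i < (1 / 2 : ℝ) ^ k := by
    intro k
    have : ∀ᶠ i in atTop, δk k i < (1 / 2 : ℝ) ^ k :=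
      (hδ0 k).eventually (eventually_lt_nhds (by positivity))
    exact eventually_atTop.mp this
  choose M hM using hMex
  -- the global threshold function and diagonal level function
  set T : ℕ → ℕ := fun k => (Finset.range (k + 1)).sup fun a => max (M a)
      ((Finset.range (k + 1)).sup fun b => (Finset.range (k + 1)).sup fun m => N a b m) with hT
  have hTM : ∀ {a k : ℕ}, a ≤ k → M a ≤ T k := by
    intro a k h
    exact le_trans (le_max_left _ _) (Finset.le_sup (f := fun a => max (M a)
      ((Finset.range (k + 1)).sup fun b => (Finset.range (k + 1)).sup fun m => N a b m))
      (Finset.mem_range.mpr (Nat.lt_succ_of_le h)))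
  have hTN : ∀ {a b m k : ℕ}, a ≤ k → b ≤ k → m ≤ k → N a b m ≤ T k := by
    intro a b m k ha hb hm
    refine le_trans ?_ (Finset.le_sup (f := fun a => max (M a)
      ((Finset.range (k + 1)).sup fun b => (Finset.range (k + 1)).sup fun m => N a b m))
      (Finset.mem_range.mpr (Nat.lt_succ_of_le ha)))
    refine le_trans ?_ (le_max_right _ _)
    refine le_trans (Finset.le_sup (f := fun m => N a b m)
      (Finset.mem_range.mpr (Nat.lt_succ_of_le hm)))
      (Finset.le_sup (f := fun b => (Finset.range (k + 1)).sup fun m => N a b m)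
      (Finset.mem_range.mpr (Nat.lt_succ_of_le hb)))
  set Kf : ℕ → ℕ := fun i => Nat.findGreatest (fun k => T k ≤ i) i with hKf
  have hKmono : Monotone Kf := fun i i' h =>
    Nat.findGreatest_mono (fun k hk => le_trans hk h) h
  have hKtop : Tendsto Kf atTop atTop := by
    rw [tendsto_atTop]
    intro k
    rw [eventually_atTop]
    exact ⟨max k (T k), fun i hi => Nat.le_findGreatest (le_trans (le_max_left _ _) hi)
      (le_trans (le_max_right _ _) hi)⟩
  have hKspec : ∀ i : ℕ, T 0 ≤ i → T (Kf i) ≤ i := fun i hi =>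
    Nat.findGreatest_spec (P := fun k => T k ≤ i) (Nat.zero_le i) hi
  -- the lifted path
  set p : (i : ℕ) → ℕ → V (n i) → ((m : ℕ) → X m) := fun i j =>
    if j ≤ ℓk (Kf i) i then
      (fun v m => if h2 : m < Kf i then pk (Kf i) i j v ⟨m, h2⟩ else x i v m)
    else y i with hp
  set ℓ : ℕ → ℕ := fun i => ℓk (Kf i) i + 1 with hℓ
  set C : ℝ := ∑ i' ∈ Finset.range (T 0), δk (Kf i') i' with hC
  have hC0 : 0 ≤ C := Finset.sum_nonneg fun i' _ => (hδp (Kf i') i').le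
  set δ : ℕ → ℝ := fun i => if T 0 ≤ i then 4 * (1 / 2 : ℝ) ^ (Kf i) else C + 4 with hδ
  -- coordinates of the lifted path
  have hcoordlt : ∀ i j', j' ≤ ℓk (Kf i) i → ∀ (v : V (n i)) (m : ℕ) (h2 : m < Kf i),
      p i j' v m = pk (Kf i) i j' v ⟨m, h2⟩ := by
    intro i j' hj' v m h2
    simp only [hp]
    rw [if_pos hj']
    simp only [h2, dif_pos]
  have hcoordge : ∀ i j', j' ≤ ℓk (Kf i) i → ∀ (v : V (n i)) (m : ℕ), Kf i ≤ m →
      p i j' v m = x i v m := by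
    intro i j' hj' v m h2
    simp only [hp]
    rw [if_pos hj']
    simp only [Nat.not_lt.mpr h2, dif_neg, not_false_iff]
  have hpy : ∀ i j', ¬ (j' ≤ ℓk (Kf i) i) → p i j' = y i := by
    intro i j' hj'
    simp only [hp]
    rw [if_neg hj']
  -- summability of the coordinate series
  have hgsum : Summable (fun m : ℕ => ((1:ℝ)/2)^(m+1)) :=
    ((summable_geometric_of_lt_one (r := (1:ℝ)/2) (by norm_num) (by norm_num)).mul_left
      ((1:ℝ)/2)).congr (fun m => by ring)
  have hsumm : ∀ a b : (m : ℕ) → X m,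
      Summable (fun m => ((1:ℝ)/2)^(m+1) * dist (a m) (b m)) := by
    intro a b
    refine Summable.of_nonneg_of_le (fun m => by positivity) (fun m => ?_) hgsum
    calc ((1:ℝ)/2)^(m+1) * dist (a m) (b m) ≤ ((1:ℝ)/2)^(m+1) * 1 := by
          exact mul_le_mul_of_nonneg_left (hdiam m (a m) (b m)) (by positivity)
      _ = ((1:ℝ)/2)^(m+1) := mul_one _
  have hMi : ∀ i, T 0 ≤ i → δk (Kf i) i < (1/2:ℝ)^(Kf i) := by
    intro i hT0
    exact hM (Kf i) i (le_trans (hTM (le_refl (Kf i))) (hKspec i hT0))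
  have hCi : ∀ i, ¬ T 0 ≤ i → δk (Kf i) i ≤ C := by
    intro i hT0
    exact Finset.single_le_sum (f := fun i' => δk (Kf i') i')
      (fun i' _ => (hδp (Kf i') i').le) (Finset.mem_range.mpr (Nat.not_le.mp hT0))
  refine ⟨δ, ℓ, p, ?_, ?_, ?_, ?_, ?_, ?_, ?_⟩
  · -- Antitone δ
    intro i i' hii'
    simp only [hδ]
    by_cases h1 : T 0 ≤ i
    · have h2 : T 0 ≤ i' := le_trans h1 hii'
      simp only [h1, h2, if_true]
      have hpow : ((1:ℝ)/2)^(Kf i') ≤ (1/2)^(Kf i) :=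
        pow_le_pow_of_le_one (by norm_num) (by norm_num) (hKmono hii')
      linarith
    · simp only [h1, if_false]
      by_cases h2 : T 0 ≤ i'
      · simp only [h2, if_true]
        have hle : ((1:ℝ)/2)^(Kf i') ≤ 1 := pow_le_one₀ (by norm_num) (by norm_num)
        linarith
      · simp only [h2, if_false]
        exact le_refl _
  · -- positivity
    intro i
    by_cases h : T 0 ≤ i <;> simp only [hδ, h, if_true, if_false] <;> positivity
  · -- δ → 0
    have h1 : Tendsto (fun i => 4 * ((1:ℝ)/2)^(Kf i)) atTop (𝓝 0) := by
      have h0 := (tendsto_pow_atTop_nhds_zero_of_lt_one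
        (by norm_num : (0:ℝ) ≤ 1/2) (by norm_num : (1:ℝ)/2 < 1)).comp hKtop
      have := h0.const_mul (4:ℝ)
      simpa using this
    refine Tendsto.congr' ?_ h1
    filter_upwards [eventually_ge_atTop (T 0)] with i hi
    simp only [hδ, hi, if_true]
  · -- p i 0 = x i
    intro i
    simp only [hp, Nat.zero_le, if_true]
    funext v m
    by_cases h2 : m < Kf i
    · simp only [h2, dif_pos]
      have := hp0 (Kf i) i
      have := congrFun (congrFun this v) ⟨m, h2⟩
      simpa using this
    · simp only [h2, dif_neg, not_false_iff]
  · -- p i (ℓ i) = y i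
    intro i
    simp only [hp, hℓ]
    rw [if_neg (by omega)]
  · -- step bounds
    intro i j hj
    have hcard : (0:ℝ) < (Fintype.card (V (n i)) : ℝ) := by exact_mod_cast Fintype.card_pos
    have hδbig : (1/2:ℝ)^(Kf i) < δ i ∧ δk (Kf i) i < δ i := by
      by_cases hT0 : T 0 ≤ i
      · have h1 := hMi i hT0
        have h2 : δ i = 4 * (1/2:ℝ)^(Kf i) := by simp [hδ, hT0]
        have h4 := pow_pos (by norm_num : (0:ℝ) < 1/2) (Kf i)
        constructor <;> rw [h2] <;> linarith
      · have h1 := hCi i hT0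
        have h2 : δ i = C + 4 := by simp [hδ, hT0]
        have h3 : ((1:ℝ)/2)^(Kf i) ≤ 1 := pow_le_one₀ (by norm_num) (by norm_num)
        constructor <;> rw [h2] <;> linarith
    rcases Nat.lt_or_ge j (ℓk (Kf i) i) with hcase | hcase
    · -- interior step
      have hjle : j ≤ ℓk (Kf i) i := hcase.le
      have hj1le : j + 1 ≤ ℓk (Kf i) i := hcase
      have hper : ∀ v : V (n i),
          (∑' m : ℕ, (1/2:ℝ)^(m+1) * dist (p i j v m) (p i (j+1) v m))
          = ∑ jj : Fin (Kf i), (1/2:ℝ)^((jj:ℕ)+1) *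
              dist (pk (Kf i) i j v jj) (pk (Kf i) i (j+1) v jj) := by
        intro v
        have hz : ∀ m ∉ Finset.range (Kf i),
            (1/2:ℝ)^(m+1) * dist (p i j v m) (p i (j+1) v m) = 0 := by
          intro m hm
          have hge : Kf i ≤ m := Nat.le_of_not_lt (fun hc => hm (Finset.mem_range.mpr hc))
          rw [hcoordge i j hjle v m hge, hcoordge i (j+1) hj1le v m hge]
          simp
        rw [tsum_eq_sum hz, ← Fin.sum_univ_eq_sum_range
          (fun m => (1/2:ℝ)^(m+1) * dist (p i j v m) (p i (j+1) v m)) (Kf i)]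
        refine Finset.sum_congr rfl fun jj _ => ?_
        rw [hcoordlt i j hjle v (jj:ℕ) jj.2, hcoordlt i (j+1) hj1le v (jj:ℕ) jj.2]
      have e1 : hamming (fun a b : (i' : ℕ) → X i' =>
            ∑' m : ℕ, (1/2:ℝ)^(m+1) * dist (a m) (b m)) (p i j) (p i (j+1))
          = hamming (fun a b : (jj : Fin (Kf i)) → X (jj : ℕ) =>
              ∑ jj : Fin (Kf i), (1/2:ℝ)^((jj:ℕ)+1) * dist (a jj) (b jj))
            (pk (Kf i) i j) (pk (Kf i) i (j+1)) := by
        simp only [hamming]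
        congr 1
        exact Finset.sum_congr rfl fun v _ => hper v
      calc hamming (fun a b : (i' : ℕ) → X i' =>
            ∑' m : ℕ, (1/2:ℝ)^(m+1) * dist (a m) (b m)) (p i j) (p i (j+1))
          = _ := e1
        _ < δk (Kf i) i := hstep (Kf i) i j hcase
        _ < δ i := hδbig.2
    · -- the final jump
      have hjeq : j = ℓk (Kf i) i := by
        simp only [hℓ] at hj
        omega
      have hyeq : p i (j+1) = y i := hpy i (j+1) (by omega)
      have hper : ∀ v : V (n i),
          (∑' m : ℕ, (1/2:ℝ)^(m+1) * dist (p i j v m) (p i (j+1) v m))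
            ≤ (1/2:ℝ)^(Kf i) := by
        intro v
        rw [← tsum_halfpow_tail (Kf i)]
        refine Summable.tsum_le_tsum (fun m => ?_) (hsumm _ _) (summable_halfpow_tail (Kf i))
        by_cases h2 : m < Kf i
        · rw [if_pos h2]
          have e1 := hcoordlt i j (le_of_eq hjeq) v m h2
          have e2 : pk (Kf i) i j v ⟨m, h2⟩ = y i v m := by
            rw [hjeq]
            have := congrFun (congrFun (hpl (Kf i) i) v) ⟨m, h2⟩
            simpa using this
          rw [e1, e2, hyeq]
          simp
        · rw [if_neg h2]
          calc (1/2:ℝ)^(m+1) * dist (p i j v m) (p i (j+1) v m)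
              ≤ (1/2:ℝ)^(m+1) * 1 :=
                mul_le_mul_of_nonneg_left (hdiam m _ _) (by positivity)
            _ = (1/2:ℝ)^(m+1) := mul_one _
      have hham : hamming (fun a b : (i' : ℕ) → X i' =>
            ∑' m : ℕ, (1/2:ℝ)^(m+1) * dist (a m) (b m)) (p i j) (p i (j+1))
          ≤ (1/2:ℝ)^(Kf i) := by
        simp only [hamming]
        rw [div_le_iff₀ hcard]
        calc (∑ v : V (n i), ∑' m : ℕ, (1/2:ℝ)^(m+1) * dist (p i j v m) (p i (j+1) v m))
            ≤ ∑ _v : V (n i), (1/2:ℝ)^(Kf i) := Finset.sum_le_sum fun v _ => hper v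
          _ = (Fintype.card (V (n i)) : ℝ) * (1/2:ℝ)^(Kf i) := by
              rw [Finset.sum_const, Finset.card_univ, nsmul_eq_mul]
          _ = (1/2:ℝ)^(Kf i) * (Fintype.card (V (n i)) : ℝ) := mul_comm _ _
      exact lt_of_le_of_lt hham hδbig.1
  · -- the neighbourhood condition
    intro O hO
    by_contra hcon
    rw [Filter.not_eventually] at hcon
    obtain ⟨φ, hφ, hfreq⟩ := extraction_of_frequently_atTop hcon
    have hfreq' : ∀ m, ∃ j, j ≤ ℓ (φ m) ∧ empDist (σ (n (φ m))) (p (φ m) j) ∉ O := by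
      intro m
      have := hfreq m
      push_neg at this
      exact this
    choose jj hjle hnot using hfreq'
    have hQlim : Tendsto (fun m => empDist (σ (n (φ m))) (p (φ m) (jj m))) atTop (𝓝 lam) := by
      apply tendsto_of_forall_marginal X y₀ lam
      intro K
      have key : Tendsto (fun m => (empDist (σ (n (φ m))) (p (φ m) (jj m))).map
          (measurable_projW X K).aemeasurable) atTop (𝓝 (lamK K)) := by
        rw [(hB K).toHasBasis.tendsto_right_iff]
        intro m' _
        have e1 : ∀ᶠ m in atTop, max K m' ≤ Kf (φ m) :=
          (hKtop.comp hφ.tendsto_atTop).eventually_ge_atTop (max K m')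
        have e2 : ∀ᶠ m in atTop, T 0 ≤ φ m := hφ.tendsto_atTop.eventually_ge_atTop (T 0)
        have hBK : B K m' ∈ 𝓝 (lamK K) := (hB K).1.mem_of_mem trivial
        have e3' : ∀ᶠ i in atTop,
            empDist (σ (n i)) (fun v => fun j : Fin K => y i v (j : ℕ)) ∈ B K m' :=
          (hempy K) hBK
        have e3 : ∀ᶠ m in atTop,
            empDist (σ (n (φ m))) (fun v => fun j : Fin K => y (φ m) v (j : ℕ)) ∈ B K m' :=
          hφ.tendsto_atTop.eventually e3'
        filter_upwards [e1, e2, e3] with m h1 h2 h3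
        by_cases hcase : jj m ≤ ℓk (Kf (φ m)) (φ m)
        · -- a lifted point of the level-`Kf (φ m)` path
          have hmc := empDist_map_comp (σ (n (φ m)))
            (fun a : (i' : ℕ) → X i' => fun j : Fin K => a (j : ℕ))
            (measurable_pi_lambda _ fun j => measurable_pi_apply _) (p (φ m) (jj m))
          have hfun : (fun v => fun j : Fin K => p (φ m) (jj m) v (j : ℕ))
              = (fun v => truncY X y₀ K (Kf (φ m)) (pk (Kf (φ m)) (φ m) (jj m) v)) := by
            funext v j
            have hjK : (j : ℕ) < Kf (φ m) := lt_of_lt_of_le j.2 (le_trans (le_max_left _ _) h1)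
            rw [hcoordlt (φ m) (jj m) hcase v (j : ℕ) hjK]
            simp only [truncY, hjK, dif_pos]
          rw [hfun] at hmc
          refine (congrArg (· ∈ B K m') hmc).mpr ?_
          refine hN (Kf (φ m)) K m' (le_trans (le_max_left _ _) h1) (φ m) ?_ (jj m) hcase
          exact le_trans (hTN (le_refl _) (le_trans (le_max_left _ _) h1)
            (le_trans (le_max_right _ _) h1)) (hKspec (φ m) h2)
        · -- the terminal point `y (φ m)`
          have hyeq : p (φ m) (jj m) = y (φ m) := hpy (φ m) (jj m) hcase
          rw [hyeq]
          have hmc := empDist_map_comp (σ (n (φ m)))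
            (fun a : (i' : ℕ) → X i' => fun j : Fin K => a (j : ℕ))
            (measurable_pi_lambda _ fun j => measurable_pi_apply _) (y (φ m))
          refine (congrArg (· ∈ B K m') hmc).mpr ?_
          exact h3
      exact key
    have hev : ∀ᶠ m in atTop, empDist (σ (n (φ m))) (p (φ m) (jj m)) ∈ O := hQlim hO
    obtain ⟨m, hm⟩ := hev.exists
    exact hnot m hm
end

section
/- Let G be a countable discrete group with a sofic approximation Σ and let (X^G, μ, S, d) be a metric G-process. Then the following are equivalent: (1) the process has connected model spaces rel Σ; (2) for every δ > 0 and every weak* neighbourhood O of μ, there is a weak* neighbourhood O' ⊆ O of μ such that the pair (Ω(O', σ_n), Ω(O, σ_n)) is relatively δ-connected according to d^{(V_n)} for all sufficiently large n. Moreover, both (1) and (2) are implied by: (3) for every δ > 0, μ has a base of weak* neighbourhoods N such that Ω(N, σ_n) is δ-connected according to d^{(V_n)} for all sufficiently large n. -/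
open MeasureTheory Filter Topology
open scoped ENNReal NNReal

/-- A `δ`-path from `x` to `y` staying inside `B`, with respect to the distance function `d`. -/
def DeltaPathIn {A : Type*} (d : A → A → ℝ) (δ : ℝ) (B : Set A) (x y : A) : Prop :=
  ∃ (ℓ : ℕ) (p : ℕ → A), p 0 = x ∧ p ℓ = y ∧ (∀ j ≤ ℓ, p j ∈ B) ∧
    ∀ j < ℓ, d (p j) (p (j + 1)) < δ

/-- A set is `δ`-connected if any two of its points are joined by a `δ`-path inside it. -/
def DeltaConnected {A : Type*} (d : A → A → ℝ) (δ : ℝ) (B : Set A) : Prop :=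
  ∀ x ∈ B, ∀ y ∈ B, DeltaPathIn d δ B x y

/-- A nested pair `(A₀, B)` is relatively `δ`-connected if any two points of `A₀` are joined by a
`δ`-path inside `B`. -/
def RelDeltaConnected {A : Type*} (d : A → A → ℝ) (δ : ℝ) (A₀ B : Set A) : Prop :=
  ∀ x ∈ A₀, ∀ y ∈ A₀, DeltaPathIn d δ B x y


section Aux

lemma DeltaPathIn.mono_set {A : Type*} {d : A → A → ℝ} {δ : ℝ} {B B' : Set A} {x y : A}
    (hBB : B ⊆ B') (h : DeltaPathIn d δ B x y) : DeltaPathIn d δ B' x y := by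
  obtain ⟨ℓ, p, h0, h1, hB, hd⟩ := h
  exact ⟨ℓ, p, h0, h1, fun j hj => hBB (hB j hj), hd⟩

lemma hamming_le {V : Type*} [Fintype V] [Nonempty V] {X : Type*} [PseudoMetricSpace X]
    {C : ℝ} (hC : ∀ a b : X, dist a b ≤ C) (x y : V → X) : hamming dist x y ≤ C := by
  rw [hamming, div_le_iff₀ (by exact_mod_cast Fintype.card_pos)]
  calc ∑ v, dist (x v) (y v) ≤ ∑ _v : V, C := Finset.sum_le_sum fun v _ => hC _ _
    _ = C * Fintype.card V := by
      rw [Finset.sum_const, nsmul_eq_mul, mul_comm, Finset.card_univ]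

variable {G : Type} [Group G] [Countable G]
  {V : ℕ → Type} [∀ n, Fintype (V n)] [∀ n, Nonempty (V n)]
  {σ : ∀ n, G → Equiv.Perm (V n)}
  {X : Type} [MetricSpace X] [CompactSpace X] [MeasurableSpace X] [BorelSpace X]
  {μ : ProbabilityMeasure (G → X)}

lemma aux_p2_to_p1
    (h2 : ∀ δ : ℝ, 0 < δ → ∀ O ∈ 𝓝 μ, ∃ O' ∈ 𝓝 μ, O' ⊆ O ∧
        ∀ᶠ n in atTop, RelDeltaConnected (hamming dist) δ
          {x : V n → X | empDist (σ n) x ∈ O'} {x : V n → X | empDist (σ n) x ∈ O}) :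
    ConnectedModelSpaces V σ X dist μ := by
  obtain ⟨B, hB⟩ := (𝓝 μ).exists_antitone_basis
  intro n hn x y hx hy
  have hXne : Nonempty X := ⟨x 0 (Classical.arbitrary (V (n 0)))⟩
  obtain ⟨C, hC⟩ := Metric.isBounded_iff.mp (isCompact_univ (X := X)).isBounded
  have hC' : ∀ a b : X, dist a b ≤ C := fun a b => hC trivial trivial
  have hC0 : 0 ≤ C :=
    le_trans (by simp) (hC' (Classical.arbitrary X) (Classical.arbitrary X))
  set c : ℝ := C + 1 with hc
  have hcpos : 0 < c := by simp only [hc]; linarith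
  have hc1 : 1 ≤ c := by simp only [hc]; linarith
  have hlev : ∀ k : ℕ, ∃ O' ∈ 𝓝 μ, O' ⊆ B k ∧
      ∀ᶠ m in atTop, RelDeltaConnected (hamming dist) (1 / ((k : ℝ) + 1))
        {z : V m → X | empDist (σ m) z ∈ O'} {z : V m → X | empDist (σ m) z ∈ B k} :=
    fun k => h2 _ (by positivity) (B k) (hB.toHasBasis.mem_of_mem trivial)
  choose O' hO'mem hO'sub hrel using hlev
  have hthr : ∀ k : ℕ, ∃ T : ℕ, ∀ i ≥ T,
      ((empDist (σ (n i)) (x i) ∈ O' k ∧ empDist (σ (n i)) (y i) ∈ O' k) ∧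
        RelDeltaConnected (hamming dist) (1 / ((k : ℝ) + 1))
          {z : V i → X | empDist (σ i) z ∈ O' k} {z : V i → X | empDist (σ i) z ∈ B k}) := by
    intro k
    have e1 : ∀ᶠ i in atTop, empDist (σ (n i)) (x i) ∈ O' k := hx.eventually_mem (hO'mem k)
    have e2 : ∀ᶠ i in atTop, empDist (σ (n i)) (y i) ∈ O' k := hy.eventually_mem (hO'mem k)
    exact eventually_atTop.mp ((e1.and e2).and (hrel k))
  choose T hT using hthr
  set m : ℕ → ℕ := fun k => Nat.rec 0 (fun k ih => max (T (k + 1)) ih + 1) k with hm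
  have hm0 : m 0 = 0 := rfl
  have hmsucc : ∀ k, m (k + 1) = max (T (k + 1)) (m k) + 1 := fun k => rfl
  have hmmono : StrictMono m := strictMono_nat_of_lt_succ fun k => by rw [hmsucc]; omega
  have hmT : ∀ k, T (k + 1) ≤ m (k + 1) := fun k => by rw [hmsucc]; omega
  set K : ℕ → ℕ := fun i => Nat.findGreatest (fun k => m k ≤ i) i with hKdef
  have hK1 : ∀ i, m (K i) ≤ i := fun i =>
    Nat.findGreatest_spec (P := fun k => m k ≤ i) (Nat.zero_le i)
      (show m 0 ≤ i by rw [hm0]; exact Nat.zero_le i)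
  have hKmono : Monotone K := fun i i' hii =>
    Nat.le_findGreatest ((Nat.findGreatest_le i).trans hii) ((hK1 i).trans hii)
  have hKge : ∀ k i, m k ≤ i → k ≤ K i := fun k i h =>
    Nat.le_findGreatest (hmmono.le_apply.trans h) h
  have hKtop : Tendsto K atTop atTop :=
    tendsto_atTop_atTop.mpr fun b => ⟨m b, fun i hi => hKge b i hi⟩
  set δ : ℕ → ℝ := fun i => c / ((K i : ℝ) + 1) with hδdef
  have hδpos : ∀ i, 0 < δ i := fun i => by positivity
  have hclaim : ∀ i : ℕ, ∃ (ℓ : ℕ) (p : ℕ → V (n i) → X), p 0 = x i ∧ p ℓ = y i ∧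
      (∀ j < ℓ, hamming dist (p j) (p (j + 1)) < δ i) ∧
      (1 ≤ K i → ∀ j ≤ ℓ, empDist (σ (n i)) (p j) ∈ B (K i)) := by
    intro i
    cases hKi : K i with
    | zero =>
      refine ⟨1, fun j => if j = 0 then x i else y i, by simp, by simp, ?_, by omega⟩
      intro j hj
      interval_cases j
      have hle : hamming dist (x i) (y i) ≤ C := hamming_le hC' _ _
      have hδi : δ i = c := by simp [hδdef, hKi]
      simpa [hδi, hc] using lt_of_le_of_lt hle (by linarith)
    | succ k =>
      have him : m (k + 1) ≤ i := by rw [← hKi]; exact hK1 i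
      have hiT : T (k + 1) ≤ i := (hmT k).trans him
      obtain ⟨⟨hxk, hyk⟩, -⟩ := hT (k + 1) i hiT
      have hniT : T (k + 1) ≤ n i := hiT.trans hn.le_apply
      obtain ⟨ℓ, p, hp0, hpl, hpB, hpd⟩ := (hT (k + 1) (n i) hniT).2 (x i) hxk (y i) hyk
      refine ⟨ℓ, p, hp0, hpl, ?_, fun _ j hj => hpB j hj⟩
      intro j hj
      have h1 := hpd j hj
      push_cast at h1
      have h2' : (1 : ℝ) / (((k : ℝ) + 1) + 1) ≤ δ i := by
        simp only [hδdef, hKi]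
        push_cast
        gcongr
      linarith
  choose ℓ p hp0 hpl hpd hpB using hclaim
  refine ⟨δ, ℓ, p, ?_, hδpos, ?_, hp0, hpl, hpd, ?_⟩
  · intro i j hij
    simp only [hδdef]
    have : (K i : ℝ) + 1 ≤ (K j : ℝ) + 1 := by exact_mod_cast Nat.succ_le_succ (hKmono hij)
    gcongr
  · have h1 : Tendsto (fun k : ℕ => c / ((k : ℝ) + 1)) atTop (𝓝 0) := by
      simpa [div_eq_mul_inv] using tendsto_one_div_add_atTop_nhds_zero_nat.const_mul c
    exact h1.comp hKtop
  · intro O hO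
    obtain ⟨k₀, -, hk₀⟩ := hB.toHasBasis.mem_iff.mp hO
    rw [eventually_atTop]
    refine ⟨m (k₀ + 1), fun i hi j hj => ?_⟩
    have hKge' : k₀ + 1 ≤ K i := hKge _ _ hi
    exact hk₀ (hB.antitone (le_trans (Nat.le_succ k₀) hKge') (hpB i (by omega) j hj))

lemma aux_p1_to_p2 (h1 : ConnectedModelSpaces V σ X dist μ) :
    ∀ δ : ℝ, 0 < δ → ∀ O ∈ 𝓝 μ, ∃ O' ∈ 𝓝 μ, O' ⊆ O ∧
        ∀ᶠ n in atTop, RelDeltaConnected (hamming dist) δ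
          {x : V n → X | empDist (σ n) x ∈ O'} {x : V n → X | empDist (σ n) x ∈ O} := by
  intro δ hδ O hO
  by_contra hcon
  push_neg at hcon
  obtain ⟨B, hB⟩ := (𝓝 μ).exists_antitone_basis
  have hfreq : ∀ k N : ℕ, ∃ m ≥ N, ¬ RelDeltaConnected (hamming dist) δ
      {x : V m → X | empDist (σ m) x ∈ B k ∩ O} {x : V m → X | empDist (σ m) x ∈ O} := by
    intro k N
    have h := hcon (B k ∩ O) (Filter.inter_mem (hB.toHasBasis.mem_of_mem trivial) hO)
      Set.inter_subset_right
    exact frequently_atTop.mp h N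
  choose f hf1 hf2 using hfreq
  set n : ℕ → ℕ := fun k => Nat.rec (f 0 0) (fun k ih => f (k + 1) (ih + 1)) k with hndef
  have hn : StrictMono n := strictMono_nat_of_lt_succ fun k =>
    lt_of_lt_of_le (Nat.lt_succ_self _) (hf1 (k + 1) (n k + 1))
  have hFail : ∀ k, ¬ RelDeltaConnected (hamming dist) δ
      {x : V (n k) → X | empDist (σ (n k)) x ∈ B k ∩ O}
      {x : V (n k) → X | empDist (σ (n k)) x ∈ O} := by
    intro k
    cases k with
    | zero => exact hf2 0 0
    | succ k => exact hf2 (k + 1) (n k + 1)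
  have hwit : ∀ k, ∃ x, (empDist (σ (n k)) x ∈ B k ∩ O) ∧ ∃ y,
      (empDist (σ (n k)) y ∈ B k ∩ O) ∧
      ¬ DeltaPathIn (hamming dist) δ {z : V (n k) → X | empDist (σ (n k)) z ∈ O} x y := by
    intro k
    have h := hFail k
    unfold RelDeltaConnected at h
    push_neg at h
    simpa using h
  choose x hxmem y hymem hnp using hwit
  have hx : Tendsto (fun k => empDist (σ (n k)) (x k)) atTop (𝓝 μ) := by
    rw [hB.toHasBasis.tendsto_right_iff]
    intro k₀ _
    exact eventually_atTop.mpr ⟨k₀, fun k hk => hB.antitone hk (hxmem k).1⟩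
  have hy : Tendsto (fun k => empDist (σ (n k)) (y k)) atTop (𝓝 μ) := by
    rw [hB.toHasBasis.tendsto_right_iff]
    intro k₀ _
    exact eventually_atTop.mpr ⟨k₀, fun k hk => hB.antitone hk (hymem k).1⟩
  obtain ⟨δ', ℓ, p, -, -, h0, hp0, hpl, hham, hOall⟩ := h1 n hn x y hx hy
  have hev1 : ∀ᶠ i in atTop, δ' i < δ := h0.eventually_lt_const hδ
  obtain ⟨i, hi1, hi2⟩ := (hev1.and (hOall O hO)).exists
  exact hnp i ⟨ℓ i, p i, hp0 i, hpl i, hi2, fun j hj => (hham i j hj).trans hi1⟩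

end Aux
/-- Reformulations of the property of having connected model spaces: (1) ↔ (2), and (3) implies
both. -/
theorem connectedModelSpaces_reform {G : Type} [Group G] [Countable G]
    (V : ℕ → Type) [∀ n, Fintype (V n)] [∀ n, Nonempty (V n)]
    (σ : ∀ n, G → Equiv.Perm (V n)) (hsofic : IsSoficApprox V σ)
    {X : Type} [MetricSpace X] [CompactSpace X] [MeasurableSpace X] [BorelSpace X]
    (μ : ProbabilityMeasure (G → X)) (hμ : ShiftInvariant μ.toMeasure) :
    (ConnectedModelSpaces V σ X dist μ ↔
      (∀ δ : ℝ, 0 < δ → ∀ O ∈ 𝓝 μ, ∃ O' ∈ 𝓝 μ, O' ⊆ O ∧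
        ∀ᶠ n in atTop, RelDeltaConnected (hamming dist) δ
          {x : V n → X | empDist (σ n) x ∈ O'} {x : V n → X | empDist (σ n) x ∈ O})) ∧
    ((∀ δ : ℝ, 0 < δ → ∀ O ∈ 𝓝 μ, ∃ N ∈ 𝓝 μ, N ⊆ O ∧
        ∀ᶠ n in atTop, DeltaConnected (hamming dist) δ {x : V n → X | empDist (σ n) x ∈ N}) →
      (ConnectedModelSpaces V σ X dist μ ∧
        (∀ δ : ℝ, 0 < δ → ∀ O ∈ 𝓝 μ, ∃ O' ∈ 𝓝 μ, O' ⊆ O ∧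
          ∀ᶠ n in atTop, RelDeltaConnected (hamming dist) δ
            {x : V n → X | empDist (σ n) x ∈ O'} {x : V n → X | empDist (σ n) x ∈ O}))) := by
  have e12 := @aux_p1_to_p2 G _ _ V _ _ σ X _ _ _ _ μ
  have e21 := @aux_p2_to_p1 G _ _ V _ _ σ X _ _ _ _ μ
  refine ⟨⟨e12, e21⟩, fun h3 => ?_⟩
  have h2 : ∀ δ : ℝ, 0 < δ → ∀ O ∈ 𝓝 μ, ∃ O' ∈ 𝓝 μ, O' ⊆ O ∧
      ∀ᶠ n in atTop, RelDeltaConnected (hamming dist) δ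
        {x : V n → X | empDist (σ n) x ∈ O'} {x : V n → X | empDist (σ n) x ∈ O} := by
    intro δ hδ O hO
    obtain ⟨N, hN, hNO, hev⟩ := h3 δ hδ O hO
    refine ⟨N, hN, hNO, hev.mono fun n hconn z hz w hw => ?_⟩
    exact (hconn z hz w hw).mono_set fun u hu => hNO hu
  exact ⟨e21 h2, h2⟩
end

section
/- Let G be a countable discrete group with a sofic approximation Σ = (σ_n), and let (X, d) be a compact metric space. For any two sequences x_n, z_n ∈ X^{V_n}, the following are equivalent: (1) d^{(V_n)}(x_n, z_n) → 0; (2) every weak* subsequential limit of the empirical distributions P^{σ_n}_{(x_n, z_n)} ∈ Pr((X×X)^G) ≅ Pr(X^G × X^G) is supported on the diagonal {(x, x) : x ∈ X^G}. Moreover, if P^{σ_n}_{x_n} weak*-converges to some Borel probability μ on X^G, then either condition implies that P^{σ_n}_{z_n} weak*-converges to μ as well. -/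
open MeasureTheory Filter Topology
open scoped ENNReal NNReal

section Aux

open BoundedContinuousFunction

variable {G : Type*} [Group G] [Countable G]

lemma integral_empDist {V X : Type*} [Fintype V] [Nonempty V]
    [TopologicalSpace X] [MeasurableSpace X] [OpensMeasurableSpace X] [SecondCountableTopology X]
    (σ : G → Equiv.Perm V) (x : V → X) (f : (G → X) →ᵇ ℝ) :
    ∫ w, f w ∂((empDist σ x : ProbabilityMeasure (G → X)) : Measure (G → X)) =
      (∑ v, f (pullbackName σ v x)) / (Fintype.card V : ℝ) := by
  have hm : ((empDist σ x : ProbabilityMeasure (G → X)) : Measure (G → X)) =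
      (Fintype.card V : ℝ≥0∞)⁻¹ • ∑ v : V, Measure.dirac (pullbackName σ v x) := rfl
  rw [hm, integral_smul_measure,
    integral_finset_sum_measure (fun v _ => f.integrable _)]
  simp only [integral_dirac' _ _ f.continuous.stronglyMeasurable]
  rw [ENNReal.toReal_inv, ENNReal.toReal_natCast, smul_eq_mul, inv_mul_eq_div]

lemma empDist_map {V X Y : Type*} [Fintype V] [Nonempty V]
    [MeasurableSpace X] [MeasurableSpace Y]
    (σ : G → Equiv.Perm V) (x : V → X) (y : V → Y)
    {F : (G → X) → (G → Y)} (hF : Measurable F)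
    (hxy : ∀ v, F (pullbackName σ v x) = pullbackName σ v y)
    (hae : AEMeasurable F (empDist σ x)) :
    (empDist σ x).map hae = empDist σ y := by
  apply MeasureTheory.ProbabilityMeasure.toMeasure_injective
  rw [ProbabilityMeasure.toMeasure_map]
  ext s hs
  rw [Measure.map_apply hF hs]
  show ((Fintype.card V : ℝ≥0∞)⁻¹ • ∑ v : V, Measure.dirac (pullbackName σ v x)) (F ⁻¹' s)
      = ((Fintype.card V : ℝ≥0∞)⁻¹ • ∑ v : V, Measure.dirac (pullbackName σ v y)) s
  simp only [Measure.smul_apply, Measure.coe_finset_sum, Finset.sum_apply, smul_eq_mul]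
  congr 1
  refine Finset.sum_congr rfl fun v _ => ?_
  rw [Measure.dirac_apply' _ (hF hs), Measure.dirac_apply' _ hs, ← hxy v]
  by_cases h : F (pullbackName σ v x) ∈ s <;> simp [Set.indicator_apply, h]

end Aux

section Compactness

open BoundedContinuousFunction TopologicalSpace

lemma exists_tendsto_subseq_probabilityMeasure {Ω : Type*} [TopologicalSpace Ω] [CompactSpace Ω]
    [T2Space Ω] [SecondCountableTopology Ω] [MeasurableSpace Ω] [BorelSpace Ω]
    (μs : ℕ → ProbabilityMeasure Ω) :
    ∃ (ms : ℕ → ℕ) (lam : ProbabilityMeasure Ω), StrictMono ms ∧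
      Tendsto (fun j => μs (ms j)) atTop (𝓝 lam) := by
  haveI : SecondCountableTopology (Ω →ᵇ ℝ) :=
    ((ContinuousMap.isometryEquivBoundedOfCompact Ω ℝ).symm.toHomeomorph).isEmbedding.secondCountableTopology
  obtain ⟨S, hSc, hSd⟩ := TopologicalSpace.exists_countable_dense (Ω →ᵇ ℝ)
  haveI : Countable ↥S := hSc.to_subtype
  have hb : ∀ (j : ℕ) (f : Ω →ᵇ ℝ),
      (∫ ω, f ω ∂(μs j : Measure Ω)) ∈ Set.Icc (-‖f‖) ‖f‖ := by
    intro j f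
    have h := f.norm_integral_le_norm (μs j : Measure Ω)
    rw [Real.norm_eq_abs, abs_le] at h
    exact ⟨h.1, h.2⟩
  set y : ℕ → (∀ f : S, (Set.Icc (-‖(f : Ω →ᵇ ℝ)‖) ‖(f : Ω →ᵇ ℝ)‖)) :=
    fun j f => ⟨_, hb j f⟩ with hy
  obtain ⟨L, ms, hms, hLt⟩ := CompactSpace.tendsto_subseq y
  have hcoord : ∀ f : S, Tendsto (fun j => ∫ ω, (f : Ω →ᵇ ℝ) ω ∂(μs (ms j) : Measure Ω))
      atTop (𝓝 (L f : ℝ)) := by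
    intro f
    have h1 : Tendsto (fun j => (y (ms j)) f) atTop (𝓝 (L f)) := tendsto_pi_nhds.mp hLt f
    exact (continuous_subtype_val.tendsto (L f)).comp h1
  have key : ∀ f : Ω →ᵇ ℝ, ∃ c : ℝ,
      Tendsto (fun j => ∫ ω, f ω ∂(μs (ms j) : Measure Ω)) atTop (𝓝 c) := by
    intro f
    apply cauchySeq_tendsto_of_complete
    rw [Metric.cauchySeq_iff]
    intro ε hε
    obtain ⟨d, hd⟩ := Metric.dense_iff.mp hSd f (ε/4) (by linarith)
    have hfd : dist f d < ε/4 := by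
      have := hd.1; rwa [Metric.mem_ball, dist_comm] at this
    have hdc : CauchySeq (fun j => ∫ ω, (d : Ω →ᵇ ℝ) ω ∂(μs (ms j) : Measure Ω)) :=
      (hcoord ⟨d, hd.2⟩).cauchySeq
    rw [Metric.cauchySeq_iff] at hdc
    obtain ⟨N, hN⟩ := hdc (ε/4) (by linarith)
    refine ⟨N, fun a ha b hb2 => ?_⟩
    have hint : ∀ c : ℕ, dist (∫ ω, f ω ∂(μs (ms c) : Measure Ω))
        (∫ ω, d ω ∂(μs (ms c) : Measure Ω)) ≤ dist f d := by
      intro c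
      have h2 := (f - d).norm_integral_le_norm (μs (ms c) : Measure Ω)
      rw [Real.dist_eq, ← integral_sub (f.integrable _) (d.integrable _), dist_eq_norm]
      simpa [Real.norm_eq_abs] using h2
    calc dist (∫ ω, f ω ∂(μs (ms a) : Measure Ω)) (∫ ω, f ω ∂(μs (ms b) : Measure Ω))
        ≤ dist (∫ ω, f ω ∂(μs (ms a) : Measure Ω)) (∫ ω, d ω ∂(μs (ms a) : Measure Ω))
          + dist (∫ ω, d ω ∂(μs (ms a) : Measure Ω)) (∫ ω, d ω ∂(μs (ms b) : Measure Ω))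
          + dist (∫ ω, d ω ∂(μs (ms b) : Measure Ω)) (∫ ω, f ω ∂(μs (ms b) : Measure Ω)) :=
        dist_triangle4 _ _ _ _
      _ < ε := by
        have := hN a ha b hb2
        have h3 := hint a
        have h4 := hint b
        rw [dist_comm] at h4
        linarith
  choose I hI using key
  have I_mono : ∀ f g : Ω →ᵇ ℝ, (∀ ω, f ω ≤ g ω) → I f ≤ I g := fun f g h =>
    le_of_tendsto_of_tendsto' (hI f) (hI g)
      (fun j => integral_mono (f.integrable _) (g.integrable _) h)
  have I_one : I 1 = 1 := by
    refine tendsto_nhds_unique (hI 1) ?_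
    have h1 : ∀ j : ℕ, ∫ ω, (1 : Ω →ᵇ ℝ) ω ∂(μs (ms j) : Measure Ω) = 1 := fun j => by simp
    simp only [h1]; exact tendsto_const_nhds
  have I_add : ∀ f g : Ω →ᵇ ℝ, I (f + g) = I f + I g := by
    intro f g
    refine tendsto_nhds_unique (hI (f + g)) ?_
    have h1 : ∀ j : ℕ, ∫ ω, (f + g) ω ∂(μs (ms j) : Measure Ω)
        = (∫ ω, f ω ∂(μs (ms j) : Measure Ω)) + ∫ ω, g ω ∂(μs (ms j) : Measure Ω) := fun j => by
      simp [integral_add (f.integrable _) (g.integrable _)]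
    simp only [h1]; exact (hI f).add (hI g)
  have I_nonneg : ∀ f : Ω →ᵇ ℝ, (∀ ω, 0 ≤ f ω) → 0 ≤ I f := fun f h =>
    ge_of_tendsto (hI f) (Eventually.of_forall fun j => integral_nonneg h)
  set FK : Set Ω → Set (Ω →ᵇ ℝ) := fun K => {f | (∀ ω, 0 ≤ f ω) ∧ ∀ ω ∈ K, 1 ≤ f ω} with hFK
  have h1FK : ∀ K, (1 : Ω →ᵇ ℝ) ∈ FK K := fun K => ⟨fun ω => by simp, fun ω _ => by simp⟩
  have hne : ∀ K : Set Ω, (I '' FK K).Nonempty := fun K => ⟨I 1, 1, h1FK K, rfl⟩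
  have hbdd : ∀ K : Set Ω, BddBelow (I '' FK K) := by
    intro K; exact ⟨0, by rintro r ⟨f, hf, rfl⟩; exact I_nonneg f hf.1⟩
  set lam0 : Set Ω → ℝ := fun K => sInf (I '' FK K) with hlam0
  have lam0_nonneg : ∀ K, 0 ≤ lam0 K := fun K =>
    le_csInf (hne K) (by rintro r ⟨f, hf, rfl⟩; exact I_nonneg f hf.1)
  have lam0_mono : ∀ K₁ K₂ : Set Ω, K₁ ⊆ K₂ → lam0 K₁ ≤ lam0 K₂ := by
    intro K₁ K₂ h
    refine csInf_le_csInf (hbdd K₁) (hne K₂) (Set.image_mono ?_)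
    rintro f ⟨h0, h1⟩; exact ⟨h0, fun ω hω => h1 ω (h hω)⟩
  have lam0_le : ∀ (K : Set Ω) (f : Ω →ᵇ ℝ), f ∈ FK K → lam0 K ≤ I f := fun K f hf =>
    csInf_le (hbdd K) ⟨f, hf, rfl⟩
  have lam0_union_le : ∀ K₁ K₂ : Set Ω, lam0 (K₁ ∪ K₂) ≤ lam0 K₁ + lam0 K₂ := by
    intro K₁ K₂
    have hkey : ∀ f₁ ∈ FK K₁, ∀ f₂ ∈ FK K₂, lam0 (K₁ ∪ K₂) ≤ I f₁ + I f₂ := by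
      intro f₁ h₁ f₂ h₂
      have hmem : f₁ + f₂ ∈ FK (K₁ ∪ K₂) := by
        refine ⟨fun ω => by simpa using add_nonneg (h₁.1 ω) (h₂.1 ω), ?_⟩
        rintro ω (hω | hω)
        · have := h₁.2 ω hω; have := h₂.1 ω; simp only [coe_add, Pi.add_apply]; linarith
        · have := h₂.2 ω hω; have := h₁.1 ω; simp only [coe_add, Pi.add_apply]; linarith
      have := lam0_le _ _ hmem
      rwa [I_add] at this
    have h2 : ∀ f₁ ∈ FK K₁, lam0 (K₁ ∪ K₂) - I f₁ ≤ lam0 K₂ := by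
      intro f₁ h₁
      refine le_csInf (hne K₂) ?_
      rintro r ⟨f₂, h₂, rfl⟩
      linarith [hkey f₁ h₁ f₂ h₂]
    have h3 : lam0 (K₁ ∪ K₂) - lam0 K₂ ≤ lam0 K₁ := by
      refine le_csInf (hne K₁) ?_
      rintro r ⟨f₁, h₁, rfl⟩
      linarith [h2 f₁ h₁]
    linarith
  have lam0_union_ge : ∀ K₁ K₂ : Set Ω, IsClosed K₁ → IsClosed K₂ → Disjoint K₁ K₂ →
      lam0 K₁ + lam0 K₂ ≤ lam0 (K₁ ∪ K₂) := by
    intro K₁ K₂ hc₁ hc₂ hd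
    obtain ⟨g, hg0, hg1, hg01⟩ := exists_continuous_zero_one_of_isClosed hc₂ hc₁ hd.symm
    set gb : Ω →ᵇ ℝ := BoundedContinuousFunction.mkOfCompact g with hgb
    refine le_csInf (hne _) ?_
    rintro r ⟨f, hf, rfl⟩
    have hm1 : f * gb ∈ FK K₁ := by
      refine ⟨fun ω => by simpa [hgb] using mul_nonneg (hf.1 ω) (hg01 ω).1, fun ω hω => ?_⟩
      have hgω : g ω = 1 := hg1 hω
      have := hf.2 ω (Or.inl hω)
      simp only [coe_mul, Pi.mul_apply, hgb, mkOfCompact_apply, hgω, mul_one]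
      exact this
    have hm2 : f * (1 - gb) ∈ FK K₂ := by
      refine ⟨fun ω => ?_, fun ω hω => ?_⟩
      · have := (hg01 ω).2
        simp only [coe_mul, Pi.mul_apply, coe_sub, Pi.sub_apply, coe_one, Pi.one_apply, hgb,
          mkOfCompact_apply]
        exact mul_nonneg (hf.1 ω) (by linarith)
      · have hgω : g ω = 0 := hg0 hω
        have := hf.2 ω (Or.inr hω)
        simp only [coe_mul, Pi.mul_apply, coe_sub, Pi.sub_apply, coe_one, Pi.one_apply, hgb,
          mkOfCompact_apply, hgω, sub_zero, mul_one]
        exact this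
    have hsum : f * gb + f * (1 - gb) = f := by ring
    calc lam0 K₁ + lam0 K₂ ≤ I (f * gb) + I (f * (1 - gb)) :=
          add_le_add (lam0_le _ _ hm1) (lam0_le _ _ hm2)
      _ = I (f * gb + f * (1 - gb)) := (I_add _ _).symm
      _ = I f := by rw [hsum]
  set C : MeasureTheory.Content Ω :=
    { toFun := fun K => Real.toNNReal (lam0 K)
      mono' := fun K₁ K₂ h => Real.toNNReal_mono (lam0_mono _ _ h)
      sup_disjoint' := by
        intro K₁ K₂ hd h₁ h₂
        have hcoe : ((K₁ ⊔ K₂ : TopologicalSpace.Compacts Ω) : Set Ω) = (K₁ : Set Ω) ∪ K₂ := rfl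
        rw [hcoe, show lam0 ((K₁ : Set Ω) ∪ K₂) = lam0 K₁ + lam0 K₂ from
          le_antisymm (lam0_union_le _ _) (lam0_union_ge _ _ h₁ h₂ hd),
          Real.toNNReal_add (lam0_nonneg _) (lam0_nonneg _)]
      sup_le' := by
        intro K₁ K₂
        have hcoe : ((K₁ ⊔ K₂ : TopologicalSpace.Compacts Ω) : Set Ω) = (K₁ : Set Ω) ∪ K₂ := rfl
        rw [hcoe]
        refine le_trans (Real.toNNReal_mono (lam0_union_le _ _)) ?_
        rw [Real.toNNReal_add (lam0_nonneg _) (lam0_nonneg _)] } with hC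
  have lamK_univ : C.toFun ⟨Set.univ, isCompact_univ⟩ = 1 := by
    have h1 : lam0 Set.univ ≤ 1 := by
      have := lam0_le Set.univ 1 (h1FK _); rwa [I_one] at this
    have h2 : (1:ℝ) ≤ lam0 Set.univ := by
      refine le_csInf (hne _) ?_
      rintro r ⟨f, hf, rfl⟩
      have : I 1 ≤ I f := I_mono 1 f (fun ω => by simpa using hf.2 ω trivial)
      rwa [I_one] at this
    show Real.toNNReal (lam0 Set.univ) = 1
    rw [le_antisymm h1 h2, Real.toNNReal_one]
  have hprob : IsProbabilityMeasure C.measure := by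
    constructor
    rw [MeasureTheory.Content.measure_apply _ MeasurableSet.univ,
      C.outerMeasure_of_isOpen Set.univ isOpen_univ]
    apply le_antisymm
    · have := C.innerContent_le ⟨Set.univ, isOpen_univ⟩ ⟨Set.univ, isCompact_univ⟩ subset_rfl
      rwa [show ∀ K, C K = (C.toFun K : ℝ≥0∞) from fun _ => rfl, lamK_univ, ENNReal.coe_one] at this
    · have := C.le_innerContent ⟨Set.univ, isCompact_univ⟩ ⟨Set.univ, isOpen_univ⟩ subset_rfl
      rwa [show ∀ K, C K = (C.toFun K : ℝ≥0∞) from fun _ => rfl, lamK_univ, ENNReal.coe_one] at this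
  let lamP : ProbabilityMeasure Ω := ⟨C.measure, hprob⟩
  refine ⟨ms, lamP, hms, tendsto_of_forall_isOpen_le_liminf ?_⟩
  intro Gs hGs
  have aux : (ENNReal.ofNNReal (atTop.liminf fun j => (μs (ms j)) Gs)) =
      atTop.liminf (fun j => ((μs (ms j)) Gs : ℝ≥0∞)) := by
    refine Monotone.map_liminf_of_continuousAt (F := atTop) ENNReal.coe_mono
      (fun j => (μs (ms j)) Gs) ENNReal.continuous_coe.continuousAt ?_ ?_
    · exact Filter.IsBoundedUnder.isCoboundedUnder_ge ⟨1, by simp⟩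
    · exact ⟨0, by simp⟩
  rw [← ENNReal.coe_le_coe, aux, ProbabilityMeasure.ennreal_coeFn_eq_coeFn_toMeasure]
  have hGmeas : lamP.toMeasure Gs
      = C.innerContent ⟨Gs, hGs⟩ := by
    show C.measure Gs = _
    rw [MeasureTheory.Content.measure_apply _ hGs.measurableSet,
      C.outerMeasure_of_isOpen Gs hGs]
  rw [hGmeas]
  refine iSup_le fun K => iSup_le fun hK => ?_
  obtain ⟨g, hg0, hg1, hg01⟩ := exists_continuous_zero_one_of_isClosed
    K.isCompact.isClosed hGs.isClosed_compl (disjoint_compl_right.mono_left hK)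
  set fb : Ω →ᵇ ℝ := BoundedContinuousFunction.mkOfCompact (1 - g) with hfbdef
  have hfb : fb ∈ FK (K : Set Ω) := by
    constructor
    · intro ω
      have := (hg01 ω).2
      simp only [hfbdef, mkOfCompact_apply, ContinuousMap.sub_apply, ContinuousMap.one_apply]
      linarith
    · intro ω hω
      have hgω : g ω = 0 := hg0 hω
      simp only [hfbdef, mkOfCompact_apply, ContinuousMap.sub_apply, ContinuousMap.one_apply, hgω,
        sub_zero, le_refl]
  have h1 : (C K : ℝ≥0∞) ≤ ENNReal.ofReal (I fb) := by
    rw [show ∀ K, C K = (C.toFun K : ℝ≥0∞) from fun _ => rfl, ENNReal.ofReal]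
    exact ENNReal.coe_le_coe.mpr (Real.toNNReal_mono (lam0_le _ _ hfb))
  refine h1.trans ?_
  have h2 : Tendsto (fun j => ENNReal.ofReal (∫ ω, fb ω ∂(μs (ms j) : Measure Ω))) atTop
      (𝓝 (ENNReal.ofReal (I fb))) := (ENNReal.continuous_ofReal.tendsto _).comp (hI fb)
  rw [← h2.liminf_eq]
  refine liminf_le_liminf (Eventually.of_forall fun j => ?_)
  have h3 : ENNReal.ofReal (∫ ω, fb ω ∂(μs (ms j) : Measure Ω)) ≤ (μs (ms j)).toMeasure Gs := by
    refine integral_le_measure (fun ω _ => ?_) (fun ω hω => ?_)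
    · have := (hg01 ω).1
      simp only [hfbdef, mkOfCompact_apply, ContinuousMap.sub_apply, ContinuousMap.one_apply]
      linarith
    · have hgω : g ω = 1 := hg1 hω
      simp only [hfbdef, mkOfCompact_apply, ContinuousMap.sub_apply, ContinuousMap.one_apply, hgω,
        sub_self, le_refl]
  simpa [ProbabilityMeasure.ennreal_coeFn_eq_coeFn_toMeasure] using h3

end Compactness

open BoundedContinuousFunction in
/-- For sequences of models `x_n, z_n ∈ X^{V_n}`: the normalized Hamming distances tend to `0`
iff every weak* subsequential limit of the joint empirical distributions is supported on the
diagonal.  Moreover, if the empirical distributions of `x_n` converge to some `μ`, then either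
condition implies that those of `z_n` converge to `μ` as well. -/
theorem hamming_tendsto_zero_iff_diagonal {G : Type} [Group G] [Countable G]
    (V : ℕ → Type) [∀ n, Fintype (V n)] [∀ n, Nonempty (V n)]
    (σ : ∀ n, G → Equiv.Perm (V n)) (hsofic : IsSoficApprox V σ)
    {X : Type} [MetricSpace X] [CompactSpace X] [MeasurableSpace X] [BorelSpace X]
    (x z : (n : ℕ) → V n → X) :
    (Tendsto (fun n => hamming dist (x n) (z n)) atTop (𝓝 0) ↔
      ∀ (lam : ProbabilityMeasure (G → X × X)) (n : ℕ → ℕ), StrictMono n →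
        Tendsto (fun j => empDist (σ (n j)) (fun v => (x (n j) v, z (n j) v))) atTop (𝓝 lam) →
        lam.toMeasure {w : G → X × X | ∀ g : G, (w g).1 = (w g).2} = 1) ∧
    (∀ μ : ProbabilityMeasure (G → X),
      Tendsto (fun n => empDist (σ n) (x n)) atTop (𝓝 μ) →
      Tendsto (fun n => hamming dist (x n) (z n)) atTop (𝓝 0) →
      Tendsto (fun n => empDist (σ n) (z n)) atTop (𝓝 μ)) := by
  classical
  have hp : ∀ n : ℕ, (fun v => (x n v, z n v)) = fun v : V n => (x n v, z n v) := fun n => rfl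
  set D : Set (G → X × X) := {w : G → X × X | ∀ g : G, (w g).1 = (w g).2} with hD
  have hDmeas : MeasurableSet D := by
    have : D = ⋂ g : G, (fun w : G → X × X => w g) ⁻¹' {q : X × X | q.1 = q.2} := by
      ext w; simp [hD, Set.mem_iInter]
    rw [this]
    exact MeasurableSet.iInter fun g =>
      (measurable_pi_apply g) (isClosed_eq continuous_fst continuous_snd).measurableSet
  have fgc : ∀ g : G, Continuous (fun w : G → X × X => dist (w g).1 (w g).2) := fun g =>
    (continuous_fst.comp (continuous_apply g)).dist (continuous_snd.comp (continuous_apply g))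
  let fg : G → ((G → X × X) →ᵇ ℝ) := fun g =>
    BoundedContinuousFunction.mkOfCompact ⟨_, fgc g⟩
  have fg_apply : ∀ (g : G) (w : G → X × X), fg g w = dist (w g).1 (w g).2 := fun g w => rfl
  have hham_nonneg : ∀ n, 0 ≤ hamming dist (x n) (z n) := fun n =>
    div_nonneg (Finset.sum_nonneg fun v _ => dist_nonneg) (Nat.cast_nonneg _)
  have fg_int : ∀ (g : G) (n : ℕ),
      (∫ w, fg g w ∂((empDist (σ n) (fun v => (x n v, z n v)) :
        ProbabilityMeasure (G → X × X)) : Measure (G → X × X)))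
        = hamming dist (x n) (z n) := by
    intro g n
    rw [integral_empDist]
    unfold hamming
    congr 1
    have h1 : ∀ v : V n, fg g (pullbackName (σ n) v (fun v => (x n v, z n v)))
        = dist (x n (σ n g v)) (z n (σ n g v)) := fun v => rfl
    rw [Finset.sum_congr rfl (fun v _ => h1 v)]
    exact Equiv.sum_comp (σ n g) (fun v => dist (x n v) (z n v))
  -- Key lemma A: hamming → 0 along a subsequence + weak convergence ⇒ limit lives on diagonal
  have keyA : ∀ (k : ℕ → ℕ) (lam : ProbabilityMeasure (G → X × X)),
      Tendsto (fun j => hamming dist (x (k j)) (z (k j))) atTop (𝓝 0) →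
      Tendsto (fun j => empDist (σ (k j)) (fun v => (x (k j) v, z (k j) v))) atTop (𝓝 lam) →
      lam.toMeasure D = 1 := by
    intro k lam h0 hconv
    rw [ProbabilityMeasure.tendsto_iff_forall_integral_tendsto] at hconv
    have hzero : ∀ g : G, (∫ w, fg g w ∂(lam : Measure (G → X × X))) = 0 := by
      intro g
      have h1 := hconv (fg g)
      have h2 : (fun j => ∫ w, fg g w ∂((empDist (σ (k j)) (fun v => (x (k j) v, z (k j) v)) :
          ProbabilityMeasure (G → X × X)) : Measure (G → X × X)))
          = fun j => hamming dist (x (k j)) (z (k j)) := funext fun j => fg_int g (k j)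
      rw [h2] at h1
      exact tendsto_nhds_unique h1 h0
    have hae : ∀ᵐ w ∂(lam : Measure (G → X × X)), w ∈ D := by
      have hall : ∀ g : G, ∀ᵐ w ∂(lam : Measure (G → X × X)), (w g).1 = (w g).2 := by
        intro g
        have hnn : (0 : (G → X × X) → ℝ) ≤ fun w => fg g w := fun w => dist_nonneg
        have hint := (fg g).integrable (lam : Measure (G → X × X))
        have := (integral_eq_zero_iff_of_nonneg hnn hint).mp (hzero g)
        filter_upwards [this] with w hw
        have hw' : dist (w g).1 (w g).2 = 0 := hw
        exact dist_eq_zero.mp hw'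
      have h := ae_all_iff.mpr hall
      filter_upwards [h] with w hw
      exact hw
    have hcompl : lam.toMeasure Dᶜ = 0 := by
      have := ae_iff.mp hae
      exact this
    have := prob_compl_eq_zero_iff hDmeas |>.mp hcompl
    exact this
  refine ⟨⟨fun h0 lam n hn hconv => keyA n lam (h0.comp hn.tendsto_atTop) hconv, ?_⟩, ?_⟩
  · -- diagonal support of all subsequential limits ⇒ hamming → 0
    intro H
    by_contra hnot
    obtain ⟨s, hs, hfreq⟩ := not_tendsto_iff_exists_frequently_notMem.mp hnot
    obtain ⟨ε, hε, hball⟩ := Metric.mem_nhds_iff.mp hs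
    have hfreq' : ∃ᶠ n in atTop, ε ≤ hamming dist (x n) (z n) := by
      refine hfreq.mono fun n hn => ?_
      by_contra hlt
      push_neg at hlt
      refine hn (hball ?_)
      rw [Metric.mem_ball, Real.dist_eq, sub_zero, abs_of_nonneg (hham_nonneg n)]
      exact hlt
    obtain ⟨φ, hφ, hφε⟩ := Filter.extraction_of_frequently_atTop hfreq'
    obtain ⟨ms2, lam, hms2, hconv⟩ := exists_tendsto_subseq_probabilityMeasure
      (fun j => empDist (σ (φ j)) (fun v => (x (φ j) v, z (φ j) v)))
    have hlamD : lam.toMeasure D = 1 := H lam (φ ∘ ms2) (hφ.comp hms2) hconv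
    rw [ProbabilityMeasure.tendsto_iff_forall_integral_tendsto] at hconv
    have h1 := hconv (fg 1)
    have h2 : (fun j => ∫ w, fg 1 w ∂((empDist (σ (φ (ms2 j)))
        (fun v => (x (φ (ms2 j)) v, z (φ (ms2 j)) v)) :
        ProbabilityMeasure (G → X × X)) : Measure (G → X × X)))
        = fun j => hamming dist (x (φ (ms2 j))) (z (φ (ms2 j))) :=
      funext fun j => fg_int 1 (φ (ms2 j))
    rw [h2] at h1
    have hge : ε ≤ ∫ w, fg 1 w ∂(lam : Measure (G → X × X)) :=
      ge_of_tendsto h1 (Eventually.of_forall fun j => hφε (ms2 j))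
    have hcompl : lam.toMeasure Dᶜ = 0 := (prob_compl_eq_zero_iff hDmeas).mpr hlamD
    have hae : ∀ᵐ w ∂(lam : Measure (G → X × X)), w ∈ D := by
      rw [ae_iff]; exact hcompl
    have hzero : (∫ w, fg 1 w ∂(lam : Measure (G → X × X))) = 0 := by
      have haez : (fun w => fg 1 w) =ᵐ[(lam : Measure (G → X × X))] 0 := by
        filter_upwards [hae] with w hw
        show dist (w 1).1 (w 1).2 = 0
        rw [hw 1]
        exact dist_self _
      rw [integral_congr_ae haez]; simp
    rw [hzero] at hge
    linarith
  · -- transfer of the limit of empirical distributions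
    intro μ hxconv h0
    have hπ1c : Continuous (fun w : G → X × X => (fun g => (w g).1 : G → X)) :=
      continuous_pi fun g => continuous_fst.comp (continuous_apply g)
    have hπ2c : Continuous (fun w : G → X × X => (fun g => (w g).2 : G → X)) :=
      continuous_pi fun g => continuous_snd.comp (continuous_apply g)
    apply tendsto_of_subseq_tendsto
    intro ns hns
    obtain ⟨ms2, lam, hms2, hconv⟩ := exists_tendsto_subseq_probabilityMeasure
      (fun j => empDist (σ (ns j)) (fun v => (x (ns j) v, z (ns j) v)))
    refine ⟨ms2, ?_⟩
    have hsub : Tendsto (fun j => ns (ms2 j)) atTop atTop := hns.comp hms2.tendsto_atTop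
    have h0' : Tendsto (fun j => hamming dist (x (ns (ms2 j))) (z (ns (ms2 j)))) atTop (𝓝 0) :=
      h0.comp hsub
    have hlamD : lam.toMeasure D = 1 := keyA (fun j => ns (ms2 j)) lam h0' hconv
    have hae : ∀ᵐ w ∂(lam : Measure (G → X × X)), w ∈ D := by
      have hcompl : lam.toMeasure Dᶜ = 0 := (prob_compl_eq_zero_iff hDmeas).mpr hlamD
      rw [ae_iff]; exact hcompl
    have hmap1 := ProbabilityMeasure.tendsto_map_of_tendsto_of_continuous _ _ hconv hπ1c
    have hmap2 := ProbabilityMeasure.tendsto_map_of_tendsto_of_continuous _ _ hconv hπ2c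
    have heq1 : ∀ j, (empDist (σ (ns (ms2 j))) (fun v => (x (ns (ms2 j)) v, z (ns (ms2 j)) v))).map
        hπ1c.measurable.aemeasurable = empDist (σ (ns (ms2 j))) (x (ns (ms2 j))) := fun j => by
      refine empDist_map _ _ _ hπ1c.measurable (fun v => ?_) _
      rfl
    have heq2 : ∀ j, (empDist (σ (ns (ms2 j))) (fun v => (x (ns (ms2 j)) v, z (ns (ms2 j)) v))).map
        hπ2c.measurable.aemeasurable = empDist (σ (ns (ms2 j))) (z (ns (ms2 j))) := fun j => by
      refine empDist_map _ _ _ hπ2c.measurable (fun v => ?_) _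
      rfl
    simp only [heq1] at hmap1
    simp only [heq2] at hmap2
    have hμ1 : lam.map hπ1c.measurable.aemeasurable = μ :=
      tendsto_nhds_unique hmap1 (hxconv.comp hsub)
    have hmapeq : lam.map hπ2c.measurable.aemeasurable = lam.map hπ1c.measurable.aemeasurable := by
      apply MeasureTheory.ProbabilityMeasure.toMeasure_injective
      rw [ProbabilityMeasure.toMeasure_map, ProbabilityMeasure.toMeasure_map]
      ext s hs
      rw [Measure.map_apply hπ2c.measurable hs, Measure.map_apply hπ1c.measurable hs]
      apply measure_congr
      filter_upwards [hae] with w hw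
      have hww : (fun g => (w g).2 : G → X) = (fun g => (w g).1 : G → X) :=
        funext fun g => (hw g).symm
      simp only [eq_iff_iff]
      show ((fun w : G → X × X => (fun g => (w g).2 : G → X)) ⁻¹' s) w
          ↔ ((fun w : G → X × X => (fun g => (w g).1 : G → X)) ⁻¹' s) w
      change ((fun g => (w g).2 : G → X) ∈ s) ↔ ((fun g => (w g).1 : G → X) ∈ s)
      rw [hww]
    rw [hmapeq, hμ1] at hmap2
    exact hmap2
end

section
/- Let G = ⟨S⟩ be generated by a finite symmetric set S, with relations R, and suppose G has Kazhdan's property (T); let r > 0 be as in the coboundary theorem for property-(T) groups. Let H ≤ G be a finite-index subgroup, Γ = (V, E) the Schreier graph on V = G/H, and K ≤ 𝕋 a closed subgroup. Then: (1) if α ∈ Z^1(Γ, K) satisfies d^{(V)}(α, B^1(Γ, K)) ≤ r, then α ∈ B^1(Γ, K); (2) given r' > 0, let ε > 0 and finite F ⊆ R be as in the near-cocycle theorem for (G, S, r'); if α ∈ Z^1_{ε,F}(Γ, K) satisfies d^{(V)}(α, B^1(Γ, K)) ≤ r, then in fact d^{(V)}(α, B^1(Γ, K)) < r'. -/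
open MeasureTheory Filter Topology
open scoped ENNReal

/-- Property (T) for the group `G` with respect to the finite generating set `S`: there is
`c > 0` such that any unitary representation with a `(S, c)`-invariant unit vector has a
nonzero invariant vector. -/
def HasPropertyT (G : Type*) [Group G] (S : Finset G) : Prop :=
  ∃ c : ℝ, 0 < c ∧
    ∀ (H : Type) (_ : NormedAddCommGroup H) (_ : InnerProductSpace ℂ H) (_ : CompleteSpace H),
      ∀ π : G →* (H ≃ₗᵢ[ℂ] H),
        (∃ v : H, ‖v‖ = 1 ∧ ∀ s ∈ S, ‖π s v - v‖ ≤ c) →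
        ∃ w : H, w ≠ 0 ∧ ∀ g : G, π g w = w

/-- A measure-preserving left action of `G` on `(X, μ)`. -/
def IsMPAction {G : Type*} [Group G] {X : Type*} [MeasurableSpace X]
    (T : G → X → X) (μ : Measure X) : Prop :=
  (∀ g, Measurable (T g)) ∧ (∀ g, Measure.map (T g) μ = μ) ∧
    T 1 = id ∧ ∀ g h, T (g * h) = T g ∘ T h

/-- Ergodicity: every strictly invariant measurable set is null or conull. -/
def IsErgodicAction {G : Type*} [Group G] {X : Type*} [MeasurableSpace X]
    (T : G → X → X) (μ : Measure X) : Prop :=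
  ∀ A : Set X, MeasurableSet A → (∀ g, T g ⁻¹' A = A) → μ A = 0 ∨ μ A = 1

/-- The sum `α(w, x)` of the cochain `α` along the word `w = s_ℓ ⋯ s_1` (the list is read with
its head the last letter applied): `α(w,x) = α(s_1,x) + α(s_2, T^{s_1}x) + ⋯`. -/
noncomputable def cocycleSum {G X : Type*} [Group G] (T : G → X → X)
    (α : G → X → UnitAddCircle) : List G → X → UnitAddCircle
  | [], _ => 0
  | s :: w, x => cocycleSum T α w x + α s (T w.prod x)

/-- `α` is a `K`-valued 1-cocycle over the system `(X, μ, T)` with respect to the generating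
set `S`: it is measurable, `K`-valued, and its 2-coboundary vanishes along every relation. -/
def IsCocycle {G : Type*} [Group G] {X : Type*} [MeasurableSpace X] (S : Finset G)
    (T : G → X → X) (μ : Measure X) (K : AddSubgroup UnitAddCircle)
    (α : G → X → UnitAddCircle) : Prop :=
  (∀ s ∈ S, Measurable (α s)) ∧ (∀ s ∈ S, ∀ x, α s x ∈ K) ∧
  ∀ w : List G, (∀ s ∈ w, s ∈ S) → w.prod = 1 → ∀ᵐ x ∂μ, cocycleSum T α w x = 0

/-- The sum of the cochain `α : E → 𝕋` around the based loop determined by the word `w` and the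
starting vertex `v` of the Schreier graph. -/
noncomputable def graphCocycleSum {G : Type*} [Group G] {H : Subgroup G}
    (α : G → G ⧸ H → UnitAddCircle) : List G → G ⧸ H → UnitAddCircle
  | [], _ => 0
  | s :: w, v => graphCocycleSum α w v + α s (w.prod • v)

/-- `α` is a `K`-valued 1-cocycle on the Schreier graph: it is `K`-valued on the edges and sums
to zero around every loop coming from a relation. -/
def IsGraphCocycle {G : Type*} [Group G] (S : Finset G) {H : Subgroup G}
    (K : AddSubgroup UnitAddCircle) (α : G → G ⧸ H → UnitAddCircle) : Prop :=
  (∀ s ∈ S, ∀ v, α s v ∈ K) ∧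
  ∀ w : List G, (∀ s ∈ w, s ∈ S) → w.prod = 1 → ∀ v, graphCocycleSum α w v = 0

/-- The set of `K`-valued 1-coboundaries on the Schreier graph. -/
def graphCoboundaries {G : Type*} [Group G] (S : Finset G) (H : Subgroup G)
    (K : AddSubgroup UnitAddCircle) : Set (G → G ⧸ H → UnitAddCircle) :=
  {γ | ∃ β : G ⧸ H → UnitAddCircle, (∀ v, β v ∈ K) ∧ ∀ s ∈ S, ∀ v, γ s v = β (s • v) - β v}

/-- The normalized Hamming distance `d^{(V)}` between two 1-cochains on the Schreier graph. -/
noncomputable def schreierDist {G : Type*} [Group G] (S : Finset G) {H : Subgroup G}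
    [Fintype (G ⧸ H)] (α γ : G → G ⧸ H → UnitAddCircle) : ℝ :=
  (∑ v : G ⧸ H, ∑ s ∈ S, ‖α s v - γ s v‖) / (Fintype.card (G ⧸ H) : ℝ)

/-- The distance from a 1-cochain to the subgroup of `K`-valued 1-coboundaries. -/
noncomputable def distToCoboundaries {G : Type*} [Group G] (S : Finset G) {H : Subgroup G}
    [Fintype (G ⧸ H)] (K : AddSubgroup UnitAddCircle)
    (α : G → G ⧸ H → UnitAddCircle) : ℝ :=
  sInf (schreierDist S α '' graphCoboundaries S H K)


section Aux

variable {G : Type*} [Group G] {H : Subgroup G}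

lemma graphCocycleSum_cob (β : G ⧸ H → UnitAddCircle) (w : List G) (v : G ⧸ H) :
    graphCocycleSum (fun s u => β (s • u) - β u) w v = β (w.prod • v) - β v := by
  induction w with
  | nil => simp [graphCocycleSum]
  | cons s w ih =>
      simp only [graphCocycleSum, ih, List.prod_cons, mul_smul]
      abel

lemma graphCocycleSum_sub (α γ : G → G ⧸ H → UnitAddCircle) (w : List G) (v : G ⧸ H) :
    graphCocycleSum (fun s u => α s u - γ s u) w v
      = graphCocycleSum α w v - graphCocycleSum γ w v := by
  induction w with
  | nil => simp [graphCocycleSum]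
  | cons s w ih =>
      simp only [graphCocycleSum, ih]
      abel

lemma cocycleSum_equiv {n : ℕ} (e : Fin n ≃ G ⧸ H) (α : G → G ⧸ H → UnitAddCircle)
    (w : List G) (x : Fin n) :
    cocycleSum (fun g y => e.symm (g • e y)) (fun s y => α s (e y)) w x
      = graphCocycleSum α w (e x) := by
  induction w with
  | nil => rfl
  | cons s w ih =>
      simp only [cocycleSum, graphCocycleSum, ih, Equiv.apply_symm_apply]

lemma schreierDist_nonneg [Fintype (G ⧸ H)] (S : Finset G)
    (α γ : G → G ⧸ H → UnitAddCircle) : 0 ≤ schreierDist S α γ := by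
  unfold schreierDist
  apply div_nonneg _ (by positivity)
  exact Finset.sum_nonneg fun v _ => Finset.sum_nonneg fun s _ => norm_nonneg _

lemma bddBelow_schreier [Fintype (G ⧸ H)] (S : Finset G) (K : AddSubgroup UnitAddCircle)
    (α : G → G ⧸ H → UnitAddCircle) :
    BddBelow (schreierDist S α '' graphCoboundaries S H K) := by
  refine ⟨0, ?_⟩
  rintro y ⟨γ, -, rfl⟩
  exact schreierDist_nonneg S α γ

lemma exists_min_cob (S : Finset G) [Fintype (G ⧸ H)]
    (K : AddSubgroup UnitAddCircle) (hK : IsClosed (K : Set UnitAddCircle))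
    (α : G → G ⧸ H → UnitAddCircle) :
    ∃ β : G ⧸ H → UnitAddCircle, (∀ v, β v ∈ K) ∧
      schreierDist S α (fun s v => β (s • v) - β v) = distToCoboundaries (H := H) S K α := by
  classical
  set C : Set (G ⧸ H → UnitAddCircle) := {β | ∀ v, β v ∈ K} with hC
  have hCeq : C = Set.pi Set.univ (fun _ : G ⧸ H => (K : Set UnitAddCircle)) := by
    ext β; simp [hC, Set.mem_pi]
  have hCcomp : IsCompact C := by
    rw [hCeq]; exact isCompact_univ_pi fun _ => hK.isCompact
  have hCne : C.Nonempty := ⟨fun _ => 0, fun v => K.zero_mem⟩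
  set f : (G ⧸ H → UnitAddCircle) → ℝ :=
    fun β => schreierDist S α (fun s v => β (s • v) - β v) with hf
  have hfc : Continuous f := by
    rw [hf]; unfold schreierDist
    apply Continuous.div_const
    apply continuous_finset_sum; intro v _
    apply continuous_finset_sum; intro s _
    show Continuous fun β : G ⧸ H → UnitAddCircle => ‖α s v - (β (s • v) - β v)‖
    exact (continuous_const.sub ((continuous_apply (s • v)).sub (continuous_apply v))).norm
  obtain ⟨β₀, hβ₀C, hmin⟩ := hCcomp.exists_isMinOn hCne hfc.continuousOn
  refine ⟨β₀, hβ₀C, ?_⟩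
  have hmem : (fun s v => β₀ (s • v) - β₀ v) ∈ graphCoboundaries S H K :=
    ⟨β₀, hβ₀C, fun s _ v => rfl⟩
  apply le_antisymm
  · apply le_csInf ⟨_, Set.mem_image_of_mem _ hmem⟩
    rintro y ⟨γ, ⟨β, hβK, hβeq⟩, rfl⟩
    have : schreierDist S α γ = f β := by
      rw [hf]; unfold schreierDist
      congr 1
      refine Finset.sum_congr rfl fun v _ => Finset.sum_congr rfl fun s hs => ?_
      rw [hβeq s hs v]
    rw [this]
    exact hmin hβK
  · exact csInf_le (bddBelow_schreier S K α) (Set.mem_image_of_mem _ hmem)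

end Aux

/-- Cocycles and near-cocycles on Schreier graphs of finite-index subgroups of a property-(T)
group: (1) a 1-cocycle at distance at most `r` from the coboundaries is itself a coboundary;
(2) an `(ε, F)`-near-cocycle at distance at most `r` from the coboundaries is in fact at
distance less than `r'`. -/
theorem schreier_coboundary_gap {G : Type*} [Group G] (S : Finset G)
    (hsym : ∀ s ∈ S, s⁻¹ ∈ S) (hgen : Subgroup.closure (S : Set G) = ⊤)
    (hT : HasPropertyT G S)
    (r : ℝ) (hr : 0 < r)
    (hcob : ∀ (X : Type) (_ : MeasurableSpace X) (_ : StandardBorelSpace X) (μ : Measure X),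
      IsProbabilityMeasure μ →
      ∀ T : G → X → X, IsMPAction T μ → IsErgodicAction T μ →
        ∀ K : AddSubgroup UnitAddCircle, IsClosed (K : Set UnitAddCircle) →
          ∀ α : G → X → UnitAddCircle, IsCocycle S T μ K α →
            (∑ s ∈ S, ∫ x, ‖α s x‖ ∂μ) ≤ r →
            ∃ β : X → UnitAddCircle, Measurable β ∧ (∀ x, β x ∈ K) ∧
              ∀ s ∈ S, ∀ᵐ x ∂μ, α s x = β (T s x) - β x)
    (H : Subgroup G) (hHfin : H.FiniteIndex) [Fintype (G ⧸ H)]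
    (K : AddSubgroup UnitAddCircle) (hK : IsClosed (K : Set UnitAddCircle)) :
    ((∀ α : G → G ⧸ H → UnitAddCircle, IsGraphCocycle S K α →
        distToCoboundaries S K α ≤ r → α ∈ graphCoboundaries S H K) ∧
      ∀ r' : ℝ, 0 < r' → ∀ (ε : ℝ) (F : Finset (List G)), 0 < ε →
        (∀ w ∈ F, (∀ s ∈ w, s ∈ S) ∧ w.prod = 1) →
        (∀ (X : Type) (_ : MeasurableSpace X) (_ : StandardBorelSpace X) (μ : Measure X),
          IsProbabilityMeasure μ →
          ∀ T : G → X → X, IsMPAction T μ → IsErgodicAction T μ →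
            ∀ K' : AddSubgroup UnitAddCircle, IsClosed (K' : Set UnitAddCircle) →
              ∀ α : G → X → UnitAddCircle,
                (∀ s ∈ S, Measurable (α s)) → (∀ s ∈ S, ∀ x, α s x ∈ K') →
                (∀ w ∈ F, (∫ x, ‖cocycleSum T α w x‖ ∂μ) < ε) →
                (∑ s ∈ S, ∫ x, ‖α s x‖ ∂μ) ≤ r →
                ∃ β : X → UnitAddCircle, Measurable β ∧ (∀ x, β x ∈ K') ∧
                  (∑ s ∈ S, ∫ x, ‖α s x - (β (T s x) - β x)‖ ∂μ) < r') →
        ∀ α : G → G ⧸ H → UnitAddCircle,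
          (∀ s ∈ S, ∀ v, α s v ∈ K) →
          (∀ w ∈ F, (∀ s ∈ w, s ∈ S) → w.prod = 1 →
            (∑ v : G ⧸ H, ‖graphCocycleSum α w v‖) / (Fintype.card (G ⧸ H) : ℝ) < ε) →
          distToCoboundaries S K α ≤ r → distToCoboundaries S K α < r') := by
  classical
  set n := Fintype.card (G ⧸ H) with hn
  haveI : NeZero n := ⟨Fintype.card_ne_zero⟩
  set e : Fin n ≃ G ⧸ H := (Fintype.equivFin (G ⧸ H)).symm with he
  set μ : Measure (Fin n) := ((n : ℝ≥0∞)⁻¹) • Measure.count with hμ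
  have hμsing : ∀ x : Fin n, μ {x} = (n : ℝ≥0∞)⁻¹ := by intro x; simp [hμ]
  haveI hprob : IsProbabilityMeasure μ := by
    constructor
    simp [hμ, Measure.count_apply_finite, ENNReal.inv_mul_cancel, NeZero.ne n]
  set T : G → Fin n → Fin n := fun g y => e.symm (g • e y) with hT
  have hmap : ∀ f : Fin n ≃ Fin n, Measure.map f μ = μ := by
    intro f
    ext s hs
    rw [Measure.map_apply (measurable_of_countable f) hs]
    simp only [hμ, Measure.smul_apply, smul_eq_mul]
    congr 1
    rw [Measure.count_apply_finite' (Set.toFinite _) (measurable_of_countable f hs),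
      Measure.count_apply_finite' (Set.toFinite s) hs]
    norm_cast
    apply Finset.card_bij (fun a _ => f a)
    · intro a ha; rw [Set.Finite.mem_toFinset] at *; exact ha
    · intro a _ b _ h; exact f.injective h
    · intro b hb; rw [Set.Finite.mem_toFinset] at hb
      exact ⟨f.symm b, by rw [Set.Finite.mem_toFinset]; simpa using hb, by simp⟩
  have hMP : IsMPAction T μ := by
    refine ⟨fun g => measurable_of_countable _, fun g => ?_, ?_, ?_⟩
    · exact hmap (e.trans ((MulAction.toPerm g).trans e.symm))
    · funext y
      show e.symm ((1 : G) • e y) = y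
      rw [one_smul, Equiv.symm_apply_apply]
    · intro g h
      funext y
      show e.symm ((g * h) • e y) = e.symm (g • e (e.symm (h • e y)))
      rw [Equiv.apply_symm_apply, mul_smul]
  have hErg : IsErgodicAction T μ := by
    intro A hA hinv
    rcases A.eq_empty_or_nonempty with h | h
    · left; simp [h]
    · right
      obtain ⟨a, ha⟩ := h
      have hAuniv : A = Set.univ := by
        ext x
        simp only [Set.mem_univ, iff_true]
        obtain ⟨g, hg⟩ := MulAction.exists_smul_eq G (e x) (e a)
        have hx : T g x = a := by rw [hT]; simp [hg]
        rw [← hinv g]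
        show T g x ∈ A
        rw [hx]; exact ha
      rw [hAuniv]; exact measure_univ
  have hint : ∀ h : G ⧸ H → ℝ, ∫ x, h (e x) ∂μ = (∑ v, h v) / n := by
    intro h
    rw [integral_fintype (.of_finite)]
    have hps : ∀ x : Fin n, (μ {x}).toReal = (n : ℝ)⁻¹ := by
      intro x; rw [hμsing]; simp [ENNReal.toReal_inv]
    simp_rw [Measure.real, hps, smul_eq_mul]
    rw [← Finset.mul_sum, Equiv.sum_comp e h]
    ring
  have hae : ∀ P : Fin n → Prop, (∀ᵐ x ∂μ, P x) → ∀ x, P x := by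
    intro P hP x
    by_contra hx
    rw [ae_iff] at hP
    have h0 : μ {x} = 0 :=
      le_antisymm (hP ▸ measure_mono (Set.singleton_subset_iff.2 hx)) zero_le
    rw [hμsing] at h0
    exact ENNReal.inv_ne_zero.2 (by simp) h0
  have hswap : ∀ α γ : G → G ⧸ H → UnitAddCircle,
      schreierDist S α γ = ∑ s ∈ S, (∑ v, ‖α s v - γ s v‖) / n := by
    intro α γ
    unfold schreierDist
    rw [Finset.sum_comm, Finset.sum_div]
  constructor
  · -- Part 1
    intro α hα hdist
    obtain ⟨β₀, hβ₀K, hβ₀eq⟩ := exists_min_cob S K hK α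
    set γ : G → G ⧸ H → UnitAddCircle := fun s v => β₀ (s • v) - β₀ v with hγ
    set α' : G → G ⧸ H → UnitAddCircle := fun s v => α s v - γ s v with hα'
    set α'' : G → Fin n → UnitAddCircle := fun s x => α' s (e x) with hα''
    have hnorm : (∑ s ∈ S, ∫ x, ‖α'' s x‖ ∂μ) ≤ r := by
      have h1 : (∑ s ∈ S, ∫ x, ‖α'' s x‖ ∂μ) = schreierDist S α γ := by
        rw [hswap α γ]
        refine Finset.sum_congr rfl fun s _ => ?_
        exact hint (fun v => ‖α s v - γ s v‖)
      rw [h1, hγ, hβ₀eq]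
      exact hdist
    have hco : IsCocycle S T μ K α'' := by
      refine ⟨fun s _ => measurable_of_countable _, fun s hs x =>
        K.sub_mem (hα.1 s hs _) (K.sub_mem (hβ₀K _) (hβ₀K _)), fun w hw hw1 => ?_⟩
      refine Filter.Eventually.of_forall fun x => ?_
      have h1 : cocycleSum T α'' w x = graphCocycleSum α' w (e x) := cocycleSum_equiv e α' w x
      have h2 : graphCocycleSum α' w (e x)
          = graphCocycleSum α w (e x) - graphCocycleSum γ w (e x) :=
        graphCocycleSum_sub α γ w (e x)
      have h3 : graphCocycleSum γ w (e x) = β₀ (w.prod • e x) - β₀ (e x) :=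
        graphCocycleSum_cob β₀ w (e x)
      rw [h1, h2, h3, hα.2 w hw hw1 (e x), hw1, one_smul]
      simp
    obtain ⟨β, hβm, hβK, hβeq⟩ :=
      hcob (Fin n) (by infer_instance) (by infer_instance) μ hprob T hMP hErg K hK α'' hco hnorm
    set βV : G ⧸ H → UnitAddCircle := fun v => β (e.symm v) with hβV
    refine ⟨fun v => β₀ v + βV v, fun v => K.add_mem (hβ₀K v) (hβK _), fun s hs v => ?_⟩
    have h4 : α'' s (e.symm v) = β (T s (e.symm v)) - β (e.symm v) := hae _ (hβeq s hs) (e.symm v)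
    have h5 : α s v - (β₀ (s • v) - β₀ v) = βV (s • v) - βV v := by
      simpa [hα'', hα', hγ, hβV, hT, Equiv.apply_symm_apply] using h4
    show α s v = (β₀ (s • v) + βV (s • v)) - (β₀ v + βV v)
    rw [sub_eq_iff_eq_add.mp h5]
    abel
  · -- Part 2
    intro r' hr' ε F hε hF hnear α hαK hαnear hdist
    obtain ⟨β₀, hβ₀K, hβ₀eq⟩ := exists_min_cob S K hK α
    set γ : G → G ⧸ H → UnitAddCircle := fun s v => β₀ (s • v) - β₀ v with hγ
    set α' : G → G ⧸ H → UnitAddCircle := fun s v => α s v - γ s v with hα'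
    set α'' : G → Fin n → UnitAddCircle := fun s x => α' s (e x) with hα''
    have hnorm : (∑ s ∈ S, ∫ x, ‖α'' s x‖ ∂μ) ≤ r := by
      have h1 : (∑ s ∈ S, ∫ x, ‖α'' s x‖ ∂μ) = schreierDist S α γ := by
        rw [hswap α γ]
        refine Finset.sum_congr rfl fun s _ => ?_
        exact hint (fun v => ‖α s v - γ s v‖)
      rw [h1, hγ, hβ₀eq]
      exact hdist
    have hnearint : ∀ w ∈ F, (∫ x, ‖cocycleSum T α'' w x‖ ∂μ) < ε := by
      intro w hw
      obtain ⟨hwS, hw1⟩ := hF w hw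
      have h1 : ∀ x : Fin n, cocycleSum T α'' w x = graphCocycleSum α w (e x) := by
        intro x
        have h1 : cocycleSum T α'' w x = graphCocycleSum α' w (e x) := cocycleSum_equiv e α' w x
        have h2 : graphCocycleSum α' w (e x)
            = graphCocycleSum α w (e x) - graphCocycleSum γ w (e x) :=
          graphCocycleSum_sub α γ w (e x)
        have h3 : graphCocycleSum γ w (e x) = β₀ (w.prod • e x) - β₀ (e x) :=
          graphCocycleSum_cob β₀ w (e x)
        rw [h1, h2, h3, hw1, one_smul]
        simp
      have h2 : (∫ x, ‖cocycleSum T α'' w x‖ ∂μ)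
          = (∑ v, ‖graphCocycleSum α w v‖) / n := by
        simp only [h1]
        exact hint (fun v => ‖graphCocycleSum α w v‖)
      rw [h2]
      exact hαnear w hw hwS hw1
    obtain ⟨β, hβm, hβK, hsum⟩ :=
      hnear (Fin n) (by infer_instance) (by infer_instance) μ hprob T hMP hErg K hK α''
        (fun s _ => measurable_of_countable _)
        (fun s hs x => K.sub_mem (hαK s hs _) (K.sub_mem (hβ₀K _) (hβ₀K _)))
        hnearint hnorm
    set βV : G ⧸ H → UnitAddCircle := fun v => β (e.symm v) with hβV
    set β'' : G ⧸ H → UnitAddCircle := fun v => β₀ v + βV v with hβ''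
    set δ : G → G ⧸ H → UnitAddCircle := fun s v => β'' (s • v) - β'' v with hδ
    have hδmem : δ ∈ graphCoboundaries S H K :=
      ⟨β'', fun v => K.add_mem (hβ₀K v) (hβK _), fun s _ v => rfl⟩
    have hle : distToCoboundaries S K α ≤ schreierDist S α δ :=
      csInf_le (bddBelow_schreier S K α) (Set.mem_image_of_mem _ hδmem)
    have heq : (∑ s ∈ S, ∫ x, ‖α'' s x - (β (T s x) - β x)‖ ∂μ) = schreierDist S α δ := by
      rw [hswap α δ]
      refine Finset.sum_congr rfl fun s hs => ?_
      have hpt : ∀ x : Fin n, α'' s x - (β (T s x) - β x) = α s (e x) - δ s (e x) := by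
        intro x
        simp only [hα'', hα', hγ, hδ, hβ'', hβV, hT]
        rw [Equiv.symm_apply_apply]
        abel
      simp only [hpt]
      exact hint (fun v => ‖α s v - δ s v‖)
    calc distToCoboundaries S K α ≤ schreierDist S α δ := hle
      _ = ∑ s ∈ S, ∫ x, ‖α'' s x - (β (T s x) - β x)‖ ∂μ := heq.symm
      _ < r' := hsum
end
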